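/- arXiv:2601.17537 — 3 statements merged into one kernel-verified Lean document; each statement's English description precedes it below -/
import Mathlib

section
/- Let X be a partial HDA, K ⊆ X a set of cells, U ⊊ V conclists, W ⊆ V, and P an interval ipomset in iPoms^q with target interface U. Then X(K, P*⟨U,V,W⟩) = X(X(K,P), ⟨U,V,W⟩), where ⟨U,V,W⟩ is the discrete ipomset on V with source interface U and target interface W. -/
open scoped Classical

namespace HDA

/-! ### Ipomsets over a fixed alphabet -/

structure PreIpomset (σ : Type) : Type 1 where
  carrier : Type
  fin : Finite carrier
  lt : carrier → carrier → Prop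
  evord : carrier → carrier → Prop
  S : Set carrier
  T : Set carrier
  lab : carrier → σ

namespace PreIpomset

variable {σ : Type}

/-- The precedence order is empty. -/
def Discrete (P : PreIpomset σ) : Prop := ∀ x y, ¬ P.lt x y

/-- Validity: `lt` is a strict partial order which is an interval order, `evord` is acyclic,
for distinct events exactly one of the four relations holds, sources are minimal and
targets are maximal.  (All ipomsets considered are interval.) -/
structure IsIpomset (P : PreIpomset σ) : Prop where
  lt_trans : ∀ x y z, P.lt x y → P.lt y z → P.lt x z
  lt_irrefl : ∀ x, ¬ P.lt x x
  evord_acyclic : ∀ x, ¬ Relation.TransGen P.evord x x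
  total : ∀ x y : P.carrier, x ≠ y → P.lt x y ∨ P.lt y x ∨ P.evord x y ∨ P.evord y x
  lt_not_evord : ∀ x y, P.lt x y → ¬ P.evord x y ∧ ¬ P.evord y x
  src_min : ∀ x ∈ P.S, ∀ y, ¬ P.lt y x
  tgt_max : ∀ x ∈ P.T, ∀ y, ¬ P.lt x y
  interval : ∀ w x y z, P.lt w x → P.lt y z → P.lt w z ∨ P.lt y x

/-- A conclist: a discrete ipomset with empty interfaces. -/
def IsConclist (P : PreIpomset σ) : Prop :=
  P.IsIpomset ∧ P.Discrete ∧ P.S = ∅ ∧ P.T = ∅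

/-- A starter `⟨U∖A,U,U⟩`. -/
def IsStarter (P : PreIpomset σ) : Prop := P.IsIpomset ∧ P.Discrete ∧ P.T = Set.univ

/-- A terminator `⟨U,U,U∖B⟩`. -/
def IsTerminator (P : PreIpomset σ) : Prop := P.IsIpomset ∧ P.Discrete ∧ P.S = Set.univ

/-- An identity `⟨U,U,U⟩`. -/
def IsIdentityIpomset (P : PreIpomset σ) : Prop :=
  P.IsIpomset ∧ P.Discrete ∧ P.S = Set.univ ∧ P.T = Set.univ

def IsProperStarter (P : PreIpomset σ) : Prop := P.IsStarter ∧ P.S ≠ Set.univ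

def IsProperTerminator (P : PreIpomset σ) : Prop := P.IsTerminator ∧ P.T ≠ Set.univ

/-- Isomorphism of (pre)ipomsets. -/
def Iso (P Q : PreIpomset σ) : Prop :=
  ∃ f : P.carrier ≃ Q.carrier,
    (∀ x y, P.lt x y ↔ Q.lt (f x) (f y)) ∧
    (∀ x y, P.evord x y ↔ Q.evord (f x) (f y)) ∧
    (∀ x, x ∈ P.S ↔ f x ∈ Q.S) ∧
    (∀ x, x ∈ P.T ↔ f x ∈ Q.T) ∧
    (∀ x, Q.lab (f x) = P.lab x)

/-- Restriction to a subset of events, with empty interfaces. -/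
def restrict (P : PreIpomset σ) (K : Set P.carrier) : PreIpomset σ where
  carrier := {x : P.carrier // x ∈ K}
  fin := by haveI := P.fin; exact inferInstance
  lt := fun x y => P.lt x.val y.val
  evord := fun x y => P.evord x.val y.val
  S := ∅
  T := ∅
  lab := fun x => P.lab x.val

/-- The source interface of `P` as a conclist. -/
def srcIface (P : PreIpomset σ) : PreIpomset σ := P.restrict P.S

/-- The target interface of `P` as a conclist. -/
def tgtIface (P : PreIpomset σ) : PreIpomset σ := P.restrict P.T

/-- The underlying conclist (forget interfaces). -/
def conclistOf (P : PreIpomset σ) : PreIpomset σ := { P with S := ∅, T := ∅ }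

/-- The identity ipomset `⟨U,U,U⟩` on the conclist underlying `P`. -/
def idOf (P : PreIpomset σ) : PreIpomset σ := { P with S := Set.univ, T := Set.univ }

/-- The discrete ipomset `⟨S,U,T⟩` on the conclist underlying `P`. -/
def withIfaces (P : PreIpomset σ) (S T : Set P.carrier) : PreIpomset σ :=
  { P with S := S, T := T }

/-- The starter `⟨U∖A,U,U⟩` on the conclist underlying `P`. -/
def starter (P : PreIpomset σ) (A : Set P.carrier) : PreIpomset σ :=
  { P with S := Aᶜ, T := Set.univ }

/-- The terminator `⟨U,U,U∖B⟩` on the conclist underlying `P`. -/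
def terminator (P : PreIpomset σ) (B : Set P.carrier) : PreIpomset σ :=
  { P with S := Set.univ, T := Bᶜ }

/-- A matching `T_P ≅ S_Q`, i.e. an isomorphism of interface conclists
along which `P` and `Q` may be glued. -/
structure Matching (P Q : PreIpomset σ) : Type where
  g : {x : P.carrier // x ∈ P.T} ≃ {y : Q.carrier // y ∈ Q.S}
  evord_iff : ∀ x y, P.evord x.val y.val ↔ Q.evord (g x).val (g y).val
  lab_eq : ∀ x, Q.lab (g x).val = P.lab x.val

def gluePOf (P Q : PreIpomset σ) :
    P.carrier ⊕ {y : Q.carrier // y ∉ Q.S} → Option P.carrier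
  | Sum.inl x => some x
  | Sum.inr _ => none

noncomputable def glueQOf (P Q : PreIpomset σ) (m : Matching P Q) :
    P.carrier ⊕ {y : Q.carrier // y ∉ Q.S} → Option Q.carrier
  | Sum.inl x => if h : x ∈ P.T then some (m.g ⟨x, h⟩).val else none
  | Sum.inr y => some y.val

/-- The gluing `P * Q` along a matching `T_P ≅ S_Q`. -/
noncomputable def glue (P Q : PreIpomset σ) (m : Matching P Q) : PreIpomset σ where
  carrier := P.carrier ⊕ {y : Q.carrier // y ∉ Q.S}
  fin := by haveI := P.fin; haveI := Q.fin; exact inferInstance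
  lt := fun u v =>
    (∃ x x', gluePOf P Q u = some x ∧ gluePOf P Q v = some x' ∧ P.lt x x') ∨
    (∃ y y', glueQOf P Q m u = some y ∧ glueQOf P Q m v = some y' ∧ Q.lt y y') ∨
    ((∃ x, gluePOf P Q u = some x ∧ x ∉ P.T) ∧
     (∃ y, glueQOf P Q m v = some y ∧ y ∉ Q.S))
  evord := fun u v =>
    (∃ x x', gluePOf P Q u = some x ∧ gluePOf P Q v = some x' ∧ P.evord x x') ∨
    (∃ y y', glueQOf P Q m u = some y ∧ glueQOf P Q m v = some y' ∧ Q.evord y y')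
  S := {u | ∃ x, gluePOf P Q u = some x ∧ x ∈ P.S}
  T := {u | ∃ y, glueQOf P Q m u = some y ∧ y ∈ Q.T}
  lab := Sum.elim P.lab fun y => Q.lab y.val

/-- `R` is (isomorphic to) the gluing `P * Q`; in particular `T_P ≅ S_Q`. -/
def GlueRel (P Q R : PreIpomset σ) : Prop :=
  ∃ m : Matching P Q, Iso (glue P Q m) R

/-- A choice of gluing (used when a matching is known to exist). -/
noncomputable def glueChoice (P Q : PreIpomset σ) : PreIpomset σ :=
  if h : Nonempty (Matching P Q) then glue P Q h.some else P

/-- `GluesTo l R`: `R` is the gluing of the nonempty list `l` of ipomsets. -/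
inductive GluesTo : List (PreIpomset σ) → PreIpomset σ → Prop
  | single {P R : PreIpomset σ} : Iso P R → GluesTo [P] R
  | cons {P : PreIpomset σ} {l : List (PreIpomset σ)} {R' R : PreIpomset σ} :
      GluesTo l R' → GlueRel P R' R → GluesTo (P :: l) R

/-- Proper starters and proper terminators alternate. -/
def Alternating (l : List (PreIpomset σ)) : Prop :=
  l.Chain' fun P Q => (IsProperStarter P ∧ IsProperTerminator Q) ∨
    (IsProperTerminator P ∧ IsProperStarter Q)

/-- `l` is a sparse step decomposition of `R`: either a single identity, or an
alternating sequence of proper starters and proper terminators gluing to `R`. -/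
def IsSparseDecomp (l : List (PreIpomset σ)) (R : PreIpomset σ) : Prop :=
  GluesTo l R ∧
  ((∃ I, l = [I] ∧ IsIdentityIpomset I) ∨
   ((∀ P ∈ l, IsProperStarter P ∨ IsProperTerminator P) ∧ Alternating l))

/-- `P ∈ iPoms^q`: the sparse step decomposition of `P` does not end with a
proper starter (i.e. it ends with a terminator or is a single identity). -/
def InQ (P : PreIpomset σ) : Prop :=
  ∃ l, IsSparseDecomp l P ∧ ∀ Q, l.getLast? = some Q → ¬ IsProperStarter Q

end PreIpomset

open PreIpomset

variable {σ : Type}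

/-! ### Languages and rational operations -/

def glueLang (L M : Set (PreIpomset σ)) : Set (PreIpomset σ) :=
  {R | ∃ P ∈ L, ∃ Q ∈ M, GlueRel P Q R}

def powLang (L : Set (PreIpomset σ)) : ℕ → Set (PreIpomset σ)
  | 0 => L
  | n + 1 => glueLang L (powLang L n)

/-- `L⁺ = ⋃_{n ≥ 1} Lⁿ`. -/
def plusLang (L : Set (PreIpomset σ)) : Set (PreIpomset σ) := ⋃ n, powLang L n

/-- Rational languages of (interval) ipomsets: generated from `∅` and singletons
(up to isomorphism) of starters and terminators by union, gluing composition and plus. -/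
inductive Rational : Set (PreIpomset σ) → Prop
  | empty : Rational ∅
  | single {P : PreIpomset σ} : IsStarter P ∨ IsTerminator P → Rational {Q | Iso Q P}
  | union {L M : Set (PreIpomset σ)} : Rational L → Rational M → Rational (L ∪ M)
  | concat {L M : Set (PreIpomset σ)} : Rational L → Rational M → Rational (glueLang L M)
  | plus {L : Set (PreIpomset σ)} : Rational L → Rational (plusLang L)

/-! ### P-automata -/

structure PAutomaton (σ : Type) : Type 1 where
  Q : Type
  E : Type
  src : E → Q
  tgt : E → Q
  lab : E → PreIpomset σ
  mu : Q → PreIpomset σ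
  start : Set Q
  accept : Set Q

namespace PAutomaton

variable {σ : Type}

/-- The axioms of a P-automaton: finite sets of states and transitions, states
labelled by conclists, transitions by interval ipomsets, with
`μ(s(e)) ≅ S_{λ(e)}` and `μ(t(e)) ≅ T_{λ(e)}`. -/
def IsPA (A : PAutomaton σ) : Prop :=
  Finite A.Q ∧ Finite A.E ∧
  (∀ q, (A.mu q).IsConclist) ∧ (∀ e, (A.lab e).IsIpomset) ∧
  (∀ e, Iso (A.lab e).srcIface (A.mu (A.src e))) ∧
  (∀ e, Iso (A.lab e).tgtIface (A.mu (A.tgt e)))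

/-- ST-automaton: every label is a starter or a terminator. -/
def IsST (A : PAutomaton σ) : Prop := ∀ e, IsStarter (A.lab e) ∨ IsTerminator (A.lab e)

/-- gST-automaton: every label is discrete. -/
def IsGST (A : PAutomaton σ) : Prop := ∀ e, (A.lab e).Discrete

/-- No transition is labelled by an identity. -/
def NoSilent (A : PAutomaton σ) : Prop := ∀ e, ¬ IsIdentityIpomset (A.lab e)

/-- A reduced gST-automaton: no silent transitions and conditions (a)–(f). -/
def Reduced (A : PAutomaton σ) : Prop :=
  NoSilent A ∧
  (∀ e, A.tgt e ∉ A.start) ∧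
  (∀ e, A.src e ∉ A.accept) ∧
  (∀ e, (A.lab e).T = Set.univ → A.tgt e ∈ A.accept) ∧
  (∀ e, (A.lab e).S = Set.univ → A.src e ∈ A.start) ∧
  (∀ e e', A.src e ∈ A.start → A.src e' = A.src e → e' = e) ∧
  (∀ e e', A.tgt e ∈ A.accept → A.tgt e' = A.tgt e → e' = e)

/-- Paths in a P-automaton, from a state to a state. -/
inductive Path (A : PAutomaton σ) : A.Q → A.Q → Type
  | nil (q : A.Q) : Path A q q
  | cons (e : A.E) {r : A.Q} (rest : Path A (A.tgt e) r) : Path A (A.src e) r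

/-- The (interval) ipomset recognized by a path, up to isomorphism:
the gluing of the labels of its transitions (an identity for a constant path). -/
inductive Rec {A : PAutomaton σ} : ∀ {p r : A.Q}, Path A p r → PreIpomset σ → Prop
  | nil (q : A.Q) (R : PreIpomset σ) : Iso (A.mu q).idOf R → Rec (Path.nil q) R
  | cons (e : A.E) {r : A.Q} (rest : Path A (A.tgt e) r) {R' R : PreIpomset σ} :
      Rec rest R' → GlueRel (A.lab e) R' R → Rec (Path.cons e rest) R

/-- The language of a P-automaton. -/
def lang (A : PAutomaton σ) : Set (PreIpomset σ) :=
  {R | ∃ p r, ∃ α : Path A p r, p ∈ A.start ∧ r ∈ A.accept ∧ Rec α R}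

/-- Dimension of a transition. -/
noncomputable def dim (A : PAutomaton σ) (e : A.E) : ℕ := Nat.card (A.lab e).carrier

/-- Number of bad starter transitions of dimension `n`. -/
noncomputable def bst (A : PAutomaton σ) (n : ℕ) : ℕ :=
  Nat.card {e : A.E // IsProperStarter (A.lab e) ∧ A.tgt e ∉ A.accept ∧ A.dim e = n}

/-- Number of bad terminator transitions of dimension `n`. -/
noncomputable def btt (A : PAutomaton σ) (n : ℕ) : ℕ :=
  Nat.card {e : A.E // IsProperTerminator (A.lab e) ∧ A.src e ∉ A.start ∧ A.dim e = n}

/-- The automaton `𝒜_c`: remove the starter transition `c`; for every transition `e`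
out of `t(c)` add a transition `e*` from `s(c)` to `t(e)` labelled `λ(c) * λ(e)`. -/
noncomputable def Ac (A : PAutomaton σ) (c : A.E) : PAutomaton σ where
  Q := A.Q
  E := {e : A.E // e ≠ c} ⊕ {e : A.E // A.src e = A.tgt c}
  src := Sum.elim (fun e => A.src e.val) fun _ => A.src c
  tgt := Sum.elim (fun e => A.tgt e.val) fun e => A.tgt e.val
  lab := Sum.elim (fun e => A.lab e.val) fun e => glueChoice (A.lab c) (A.lab e.val)
  mu := A.mu
  start := A.start
  accept := A.accept

/-- Disjoint union of two P-automata. -/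
def sumAut (A B : PAutomaton σ) : PAutomaton σ where
  Q := A.Q ⊕ B.Q
  E := A.E ⊕ B.E
  src := Sum.elim (Sum.inl ∘ A.src) (Sum.inr ∘ B.src)
  tgt := Sum.elim (Sum.inl ∘ A.tgt) (Sum.inr ∘ B.tgt)
  lab := Sum.elim A.lab B.lab
  mu := Sum.elim A.mu B.mu
  start := Sum.inl '' A.start ∪ Sum.inr '' B.start
  accept := Sum.inl '' A.accept ∪ Sum.inr '' B.accept

/-- Concatenation `𝒜 * ℬ`: disjoint union together with identity-labelled transitions
from accepting states of `𝒜` to initial states of `ℬ` with isomorphic state labels. -/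
def concatAut (A B : PAutomaton σ) : PAutomaton σ where
  Q := A.Q ⊕ B.Q
  E := A.E ⊕ B.E ⊕
    {pq : A.Q × B.Q // pq.1 ∈ A.accept ∧ pq.2 ∈ B.start ∧ Iso (A.mu pq.1) (B.mu pq.2)}
  src := Sum.elim (Sum.inl ∘ A.src)
    (Sum.elim (Sum.inr ∘ B.src) fun pq => Sum.inl pq.val.1)
  tgt := Sum.elim (Sum.inl ∘ A.tgt)
    (Sum.elim (Sum.inr ∘ B.tgt) fun pq => Sum.inr pq.val.2)
  lab := Sum.elim A.lab (Sum.elim B.lab fun pq => (A.mu pq.val.1).idOf)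
  mu := Sum.elim A.mu B.mu
  start := Sum.inl '' A.start
  accept := Sum.inr '' B.accept

/-- Kleene plus `𝒜⁺`: add identity-labelled transitions from accepting states
to initial states with isomorphic state labels. -/
def plusAut (A : PAutomaton σ) : PAutomaton σ where
  Q := A.Q
  E := A.E ⊕
    {pq : A.Q × A.Q // pq.1 ∈ A.accept ∧ pq.2 ∈ A.start ∧ Iso (A.mu pq.1) (A.mu pq.2)}
  src := Sum.elim A.src fun pq => pq.val.1
  tgt := Sum.elim A.tgt fun pq => pq.val.2
  lab := Sum.elim A.lab fun pq => (A.mu pq.val.1).idOf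
  mu := A.mu
  start := A.start
  accept := A.accept

end PAutomaton

/-! ### Partial HDAs -/

/-- `g` exhibits `V` as the sub-conclist of `U` obtained by removing the events in `K`. -/
def IsFaceEmbed (U : PreIpomset σ) (K : Set U.carrier) (V : PreIpomset σ)
    (g : V.carrier → U.carrier) : Prop :=
  Function.Injective g ∧ Set.range g = Kᶜ ∧
  (∀ u v, V.evord u v ↔ U.evord (g u) (g v)) ∧
  (∀ u, U.lab (g u) = V.lab u)

/-- The data of a partial higher-dimensional automaton: cells labelled by conclists,
partial face maps, initial and accepting cells. -/
structure PrePHDA (σ : Type) : Type 1 where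
  cell : Type
  ev : cell → PreIpomset σ
  face : (x : cell) → Set (ev x).carrier → Set (ev x).carrier → Option cell
  start : Set cell
  accept : Set cell

namespace PrePHDA

variable {σ : Type}

/-- The lax precubical identity: whenever `δ_{A,B}(x)` and `δ_{C,D}(δ_{A,B}(x))` are
defined, `δ_{A∪C,B∪D}(x)` is defined and equal to the composite. -/
def IsLax (X : PrePHDA σ) : Prop :=
  ∀ x (A B : Set (X.ev x).carrier) y, X.face x A B = some y →
    ∀ g, IsFaceEmbed (X.ev x) (A ∪ B) (X.ev y) g →
      ∀ (C D : Set (X.ev y).carrier) z, X.face y C D = some z →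
        X.face x (A ∪ g '' C) (B ∪ g '' D) = some z

/-- The axioms of a partial HDA. -/
def IsPHDA (X : PrePHDA σ) : Prop :=
  (∀ x, (X.ev x).IsConclist) ∧
  (∀ x, X.face x ∅ ∅ = some x) ∧
  (∀ x A B y, X.face x A B = some y →
    Disjoint A B ∧ ∃ g, IsFaceEmbed (X.ev x) (A ∪ B) (X.ev y) g) ∧
  IsLax X

/-- Strictness: `δ_{C,D} ∘ δ_{A,B} = δ_{A∪C,B∪D}` as partial functions. -/
def IsStrict (X : PrePHDA σ) : Prop :=
  IsPHDA X ∧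
  (∀ x (A B : Set (X.ev x).carrier) y, X.face x A B = some y →
    ∀ g, IsFaceEmbed (X.ev x) (A ∪ B) (X.ev y) g →
      ∀ C D : Set (X.ev y).carrier,
        X.face x (A ∪ g '' C) (B ∪ g '' D) = X.face y C D) ∧
  (∀ x (A B C D : Set (X.ev x).carrier),
    Disjoint (A ∪ C) (B ∪ D) → C ∪ D ⊆ (A ∪ B)ᶜ →
    X.face x A B = none → X.face x (A ∪ C) (B ∪ D) = none)

/-- Paths in a partial HDA: sequences of upsteps and downsteps. -/
inductive Path (X : PrePHDA σ) : X.cell → X.cell → Type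
  | nil (x : X.cell) : Path X x x
  | up {x z : X.cell} (y : X.cell) (A : Set (X.ev y).carrier)
      (h : X.face y A ∅ = some x) (rest : Path X y z) : Path X x z
  | down {z w : X.cell} (y : X.cell) (B : Set (X.ev y).carrier)
      (h : X.face y ∅ B = some z) (rest : Path X z w) : Path X y w

/-- Directions of the steps of a path (`true` = upstep). -/
def Path.dirs {X : PrePHDA σ} : {x z : X.cell} → Path X x z → List Bool
  | _, _, .nil _ => []
  | _, _, .up _ _ _ rest => true :: rest.dirs
  | _, _, .down _ _ _ rest => false :: rest.dirs

/-- A path is sparse if upsteps and downsteps alternate. -/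
def Path.Sparse {X : PrePHDA σ} {x z : X.cell} (α : Path X x z) : Prop :=
  α.dirs.Chain' (· ≠ ·)

/-- Concatenation of paths. -/
def Path.comp {X : PrePHDA σ} : {x y z : X.cell} → Path X x y → Path X y z → Path X x z
  | _, _, _, .nil _, β => β
  | _, _, _, .up y A h rest, β => .up y A h (rest.comp β)
  | _, _, _, .down y B h rest, β => .down y B h (rest.comp β)

/-- The ipomset recognized by a path, up to isomorphism: the gluing of the starters
and terminators of its steps (an identity for a constant path). -/
inductive Rec {X : PrePHDA σ} : ∀ {x z : X.cell}, Path X x z → PreIpomset σ → Prop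
  | nil (x : X.cell) (R : PreIpomset σ) :
      Iso (X.ev x).idOf R → Rec (Path.nil x) R
  | up {x z : X.cell} (y : X.cell) (A : Set (X.ev y).carrier)
      (h : X.face y A ∅ = some x) (rest : Path X y z) {R' R : PreIpomset σ} :
      Rec rest R' → GlueRel ((X.ev y).starter A) R' R → Rec (Path.up y A h rest) R
  | down {z w : X.cell} (y : X.cell) (B : Set (X.ev y).carrier)
      (h : X.face y ∅ B = some z) (rest : Path X z w) {R' R : PreIpomset σ} :
      Rec rest R' → GlueRel ((X.ev y).terminator B) R' R → Rec (Path.down y B h rest) R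

/-- The language of a partial HDA. -/
def lang (X : PrePHDA σ) : Set (PreIpomset σ) :=
  {R | ∃ x z, ∃ α : Path X x z, x ∈ X.start ∧ z ∈ X.accept ∧ Rec α R}

/-- `X(K,P)`: cells reachable from `K` by a path recognizing `P`. -/
def track (X : PrePHDA σ) (K : Set X.cell) (P : PreIpomset σ) : Set X.cell :=
  {x | ∃ s, ∃ α : Path X s x, s ∈ K ∧ Rec α P}

/-- Deterministic partial HDA: at most one initial cell per conclist, and lower
face maps are "injective" in the appropriate sense. -/
def Deterministic (X : PrePHDA σ) : Prop :=
  (∀ x y, x ∈ X.start → y ∈ X.start → Iso (X.ev x) (X.ev y) → x = y) ∧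
  (∀ (y y' : X.cell) (A : Set (X.ev y).carrier) (A' : Set (X.ev y').carrier)
      (x : X.cell), X.face y A ∅ = some x → X.face y' A' ∅ = some x →
    (∃ f : (X.ev y).carrier ≃ (X.ev y').carrier,
      (∀ u v, (X.ev y).evord u v ↔ (X.ev y').evord (f u) (f v)) ∧
      (∀ u, (X.ev y').lab (f u) = (X.ev y).lab u) ∧ f '' A = A') → y = y')

end PrePHDA

/-! ### Relational HDAs -/

/-- The data of a relational HDA: face relations instead of partial face maps. -/
structure PreRHDA (σ : Type) : Type 1 where
  cell : Type
  ev : cell → PreIpomset σ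
  face : (x : cell) → Set (ev x).carrier → Set (ev x).carrier → Set cell
  start : Set cell
  accept : Set cell

namespace PreRHDA

variable {σ : Type}

/-- The axioms of a relational HDA, with the lax precubical identity
`δ_{C,D} ∘ δ_{A,B} ⊆ δ_{A∪C,B∪D}`. -/
def IsRHDA (X : PreRHDA σ) : Prop :=
  (∀ x, (X.ev x).IsConclist) ∧
  (∀ x, X.face x ∅ ∅ = {x}) ∧
  (∀ x A B y, y ∈ X.face x A B →
    Disjoint A B ∧ ∃ g, IsFaceEmbed (X.ev x) (A ∪ B) (X.ev y) g) ∧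
  (∀ x (A B : Set (X.ev x).carrier) y, y ∈ X.face x A B →
    ∀ g, IsFaceEmbed (X.ev x) (A ∪ B) (X.ev y) g →
      ∀ (C D : Set (X.ev y).carrier) z, z ∈ X.face y C D →
        z ∈ X.face x (A ∪ g '' C) (B ∪ g '' D))

/-- Paths in a relational HDA. -/
inductive Path (X : PreRHDA σ) : X.cell → X.cell → Type 1
  | nil (x : X.cell) : Path X x x
  | up {x z : X.cell} (y : X.cell) (A : Set (X.ev y).carrier)
      (h : x ∈ X.face y A ∅) (rest : Path X y z) : Path X x z
  | down {z w : X.cell} (y : X.cell) (B : Set (X.ev y).carrier)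
      (h : z ∈ X.face y ∅ B) (rest : Path X z w) : Path X y w

/-- The ipomset recognized by a path in a relational HDA. -/
inductive Rec {X : PreRHDA σ} : ∀ {x z : X.cell}, Path X x z → PreIpomset σ → Prop
  | nil (x : X.cell) (R : PreIpomset σ) :
      Iso (X.ev x).idOf R → Rec (Path.nil x) R
  | up {x z : X.cell} (y : X.cell) (A : Set (X.ev y).carrier)
      (h : x ∈ X.face y A ∅) (rest : Path X y z) {R' R : PreIpomset σ} :
      Rec rest R' → GlueRel ((X.ev y).starter A) R' R → Rec (Path.up y A h rest) R
  | down {z w : X.cell} (y : X.cell) (B : Set (X.ev y).carrier)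
      (h : z ∈ X.face y ∅ B) (rest : Path X z w) {R' R : PreIpomset σ} :
      Rec rest R' → GlueRel ((X.ev y).terminator B) R' R → Rec (Path.down y B h rest) R

/-- The language of a relational HDA. -/
def lang (X : PreRHDA σ) : Set (PreIpomset σ) :=
  {R | ∃ x z, ∃ α : Path X x z, x ∈ X.start ∧ z ∈ X.accept ∧ Rec α R}

/-- The ST-automaton `ST(X)` of a relational HDA `X`: states are cells, transitions
mimic the starting and terminating of events. -/
def stAut (X : PreRHDA σ) : PAutomaton σ where
  Q := X.cell
  E := (Σ q : X.cell, Σ A : Set (X.ev q).carrier, {p : X.cell // p ∈ X.face q A ∅}) ⊕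
       (Σ q : X.cell, Σ B : Set (X.ev q).carrier, {r : X.cell // r ∈ X.face q ∅ B})
  src := Sum.elim (fun t => t.2.2.val) fun t => t.1
  tgt := Sum.elim (fun t => t.1) fun t => t.2.2.val
  lab := Sum.elim (fun t => (X.ev t.1).starter t.2.1) fun t => (X.ev t.1).terminator t.2.1
  mu := X.ev
  start := X.start
  accept := X.accept

end PreRHDA

/-! ### The partial HDA of a reduced gST-automaton -/

open PAutomaton

/-- The cell representing a state `q` in `X(𝒜)`: `q` is merged with a terminator
transition out of it or a starter transition into it, if such exists. -/
noncomputable def cellOfState (A : PAutomaton σ) (q : A.Q) : A.E ⊕ A.Q :=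
  if h : ∃ e, IsTerminator (A.lab e) ∧ A.src e = q then Sum.inl h.choose
  else if h' : ∃ e, IsStarter (A.lab e) ∧ A.tgt e = q then Sum.inl h'.choose
  else Sum.inr q

/-- `X(𝒜)`: cells are `(Q ⊔ E)/∼`, with the only defined (nontrivial) face maps
`δ⁰_{U∖S}([e]) = [s(e)]` and `δ¹_{U∖T}([e]) = [t(e)]` for `λ(e) = ⟨S,U,T⟩`. -/
noncomputable def XofA (A : PAutomaton σ) : PrePHDA σ where
  cell := A.E ⊕ A.Q
  ev := Sum.elim (fun e => (A.lab e).conclistOf) A.mu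
  face := fun x =>
    match x with
    | Sum.inl e => fun As Bs =>
        if As = ∅ ∧ Bs = ∅ then some (Sum.inl e)
        else if As = (A.lab e).Sᶜ ∧ Bs = ∅ then some (cellOfState A (A.src e))
        else if As = ∅ ∧ Bs = (A.lab e).Tᶜ then some (cellOfState A (A.tgt e))
        else none
    | Sum.inr q => fun As Bs =>
        if As = ∅ ∧ Bs = ∅ then some (Sum.inr q) else none
  start := cellOfState A '' A.start
  accept := cellOfState A '' A.accept

end HDA

namespace HDA

open PreIpomset

namespace PreIpomset

variable {σ : Type}

lemma iso_rfl (P : PreIpomset σ) : Iso P P :=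
  ⟨Equiv.refl _, fun _ _ => Iff.rfl, fun _ _ => Iff.rfl, fun _ => Iff.rfl,
    fun _ => Iff.rfl, fun _ => rfl⟩

lemma Iso.symm {P Q : PreIpomset σ} (h : Iso P Q) : Iso Q P := by
  obtain ⟨f, h1, h2, h3, h4, h5⟩ := h
  refine ⟨f.symm, fun x y => ?_, fun x y => ?_, fun x => ?_, fun x => ?_, fun x => ?_⟩
  · rw [h1 (f.symm x) (f.symm y)]; simp
  · rw [h2 (f.symm x) (f.symm y)]; simp
  · rw [h3 (f.symm x)]; simp
  · rw [h4 (f.symm x)]; simp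
  · rw [← h5 (f.symm x)]; simp

lemma Iso.trans {P Q R : PreIpomset σ} (h : Iso P Q) (h' : Iso Q R) : Iso P R := by
  obtain ⟨f, h1, h2, h3, h4, h5⟩ := h
  obtain ⟨g, g1, g2, g3, g4, g5⟩ := h'
  exact ⟨f.trans g, fun x y => (h1 x y).trans (g1 _ _),
    fun x y => (h2 x y).trans (g2 _ _), fun x => (h3 x).trans (g3 _),
    fun x => (h4 x).trans (g4 _), fun x => (g5 (f x)).trans (h5 x)⟩

lemma GlueRel.iso_right {P Q R R' : PreIpomset σ} (h : GlueRel P Q R) (h' : Iso R R') :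
    GlueRel P Q R' := by
  obtain ⟨m, hm⟩ := h
  exact ⟨m, hm.trans h'⟩

section GlueBasics

variable {P Q : PreIpomset σ} (m : Matching P Q)

lemma gluePOf_iff (u : P.carrier ⊕ {y : Q.carrier // y ∉ Q.S}) (x : P.carrier) :
    gluePOf P Q u = some x ↔ u = Sum.inl x := by
  cases u <;> simp [gluePOf]

lemma glueQOf_inl_pos {x : P.carrier} (h : x ∈ P.T) :
    glueQOf P Q m (Sum.inl x) = some (m.g ⟨x, h⟩).val := dif_pos h

lemma glueQOf_inl_neg {x : P.carrier} (h : x ∉ P.T) :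
    glueQOf P Q m (Sum.inl x) = none := dif_neg h

lemma glueQOf_inr (y : {y : Q.carrier // y ∉ Q.S}) :
    glueQOf P Q m (Sum.inr y) = some y.val := rfl

/-- The canonical position of an event of `Q` inside the gluing. -/
noncomputable def secQ (w : Q.carrier) : P.carrier ⊕ {y : Q.carrier // y ∉ Q.S} :=
  if h : w ∈ Q.S then Sum.inl (m.g.symm ⟨w, h⟩).val else Sum.inr ⟨w, h⟩

lemma glueQOf_secQ (w : Q.carrier) : glueQOf P Q m (secQ m w) = some w := by
  unfold secQ; split_ifs with h
  · have hT : ((m.g.symm ⟨w, h⟩ : {x // x ∈ P.T}) : P.carrier) ∈ P.T := (m.g.symm ⟨w, h⟩).2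
    rw [glueQOf_inl_pos m hT]
    congr 1
    have : (⟨(m.g.symm ⟨w, h⟩ : {x // x ∈ P.T}).val, hT⟩ : {x // x ∈ P.T}) = m.g.symm ⟨w, h⟩ :=
      Subtype.ext rfl
    rw [this, m.g.apply_symm_apply]
  · rfl

lemma eq_secQ_of_glueQOf {u w} (h : glueQOf P Q m u = some w) : u = secQ m w := by
  cases u with
  | inl x =>
    by_cases hx : x ∈ P.T
    · rw [glueQOf_inl_pos m hx] at h
      have hw : w ∈ Q.S := by
        have := (m.g ⟨x, hx⟩).2
        rwa [Option.some_inj.mp h] at this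
      have hgx : m.g ⟨x, hx⟩ = ⟨w, hw⟩ := Subtype.ext (Option.some_inj.mp h)
      unfold secQ; rw [dif_pos hw]
      have : m.g.symm ⟨w, hw⟩ = ⟨x, hx⟩ := by rw [← hgx, m.g.symm_apply_apply]
      rw [this]
    · rw [glueQOf_inl_neg m hx] at h; exact absurd h (by simp)
  | inr y =>
    rw [glueQOf_inr] at h
    have hy := Option.some_inj.mp h
    unfold secQ
    rw [dif_neg (hy ▸ y.2)]
    subst hy
    rfl

lemma secQ_mem_S_iff (w : Q.carrier) :
    (∃ x, secQ m w = Sum.inl x) ↔ w ∈ Q.S := by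
  unfold secQ; split_ifs with h <;> simp [h]

lemma glue_lt_iff (u v : (glue P Q m).carrier) :
    (glue P Q m).lt u v ↔
      (∃ p p', u = Sum.inl p ∧ v = Sum.inl p' ∧ P.lt p p') ∨
      (∃ w w', glueQOf P Q m u = some w ∧ glueQOf P Q m v = some w' ∧ Q.lt w w') ∨
      ((∃ p, u = Sum.inl p ∧ p ∉ P.T) ∧ (∃ w, glueQOf P Q m v = some w ∧ w ∉ Q.S)) := by
  show ((∃ x x', gluePOf P Q u = some x ∧ gluePOf P Q v = some x' ∧ P.lt x x') ∨ _ ∨ _) ↔ _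
  simp only [gluePOf_iff (P := P) (Q := Q) u, gluePOf_iff (P := P) (Q := Q) v]; exact Iff.rfl

lemma glue_evord_iff (u v : (glue P Q m).carrier) :
    (glue P Q m).evord u v ↔
      (∃ p p', u = Sum.inl p ∧ v = Sum.inl p' ∧ P.evord p p') ∨
      (∃ w w', glueQOf P Q m u = some w ∧ glueQOf P Q m v = some w' ∧ Q.evord w w') := by
  show ((∃ x x', gluePOf P Q u = some x ∧ gluePOf P Q v = some x' ∧ P.evord x x') ∨ _) ↔ _
  simp only [gluePOf_iff (P := P) (Q := Q) u, gluePOf_iff (P := P) (Q := Q) v]; exact Iff.rfl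

lemma glue_S_iff (u : (glue P Q m).carrier) :
    u ∈ (glue P Q m).S ↔ ∃ p, u = Sum.inl p ∧ p ∈ P.S := by
  show (∃ x, gluePOf P Q u = some x ∧ x ∈ P.S) ↔ _
  simp only [gluePOf_iff (P := P) (Q := Q) u]; exact Iff.rfl

lemma glue_T_iff (u : (glue P Q m).carrier) :
    u ∈ (glue P Q m).T ↔ ∃ w, glueQOf P Q m u = some w ∧ w ∈ Q.T := Iff.rfl

lemma glue_lab_inl (p : P.carrier) :
    (glue P Q m).lab (Sum.inl p) = P.lab p := rfl

lemma glue_lab_inr (y : {y : Q.carrier // y ∉ Q.S}) :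
    (glue P Q m).lab (Sum.inr y) = Q.lab y.val := rfl

lemma glue_evord_inl_inl (p p' : P.carrier) :
    (glue P Q m).evord (Sum.inl p) (Sum.inl p') ↔ P.evord p p' := by
  erw [glue_evord_iff]
  constructor
  · rintro (⟨a, b, ha, hb, h⟩ | ⟨w, w', hw, hw', h⟩)
    · cases ha; cases hb; exact h
    · by_cases hp : p ∈ P.T
      · by_cases hp' : p' ∈ P.T
        · rw [glueQOf_inl_pos m hp] at hw
          rw [glueQOf_inl_pos m hp'] at hw'
          cases Option.some_inj.mp hw; cases Option.some_inj.mp hw'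
          exact (m.evord_iff ⟨p, hp⟩ ⟨p', hp'⟩).mpr h
        · rw [glueQOf_inl_neg m hp'] at hw'; exact absurd hw' (by simp)
      · rw [glueQOf_inl_neg m hp] at hw; exact absurd hw (by simp)
  · intro h; exact Or.inl ⟨p, p', rfl, rfl, h⟩

end GlueBasics

end PreIpomset

namespace PreIpomset

variable {σ : Type}

section GlueMore

variable {P Q : PreIpomset σ} (m : Matching P Q)

lemma glueQOf_inl_evord {p p' : P.carrier} {w w' : Q.carrier}
    (hw : glueQOf P Q m (Sum.inl p) = some w)
    (hw' : glueQOf P Q m (Sum.inl p') = some w') :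
    P.evord p p' ↔ Q.evord w w' := by
  by_cases hp : p ∈ P.T
  · by_cases hp' : p' ∈ P.T
    · rw [glueQOf_inl_pos m hp] at hw
      rw [glueQOf_inl_pos m hp'] at hw'
      cases Option.some_inj.mp hw
      cases Option.some_inj.mp hw'
      exact m.evord_iff ⟨p, hp⟩ ⟨p', hp'⟩
    · rw [glueQOf_inl_neg m hp'] at hw'; exact absurd hw' (by simp)
  · rw [glueQOf_inl_neg m hp] at hw; exact absurd hw (by simp)

lemma glueQOf_inl_lab {p : P.carrier} {w : Q.carrier}
    (hw : glueQOf P Q m (Sum.inl p) = some w) : Q.lab w = P.lab p := by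
  by_cases hp : p ∈ P.T
  · rw [glueQOf_inl_pos m hp] at hw
    cases Option.some_inj.mp hw
    exact m.lab_eq ⟨p, hp⟩
  · rw [glueQOf_inl_neg m hp] at hw; exact absurd hw (by simp)

lemma glueQOf_inl_mem_T {p : P.carrier} {w : Q.carrier}
    (hw : glueQOf P Q m (Sum.inl p) = some w) : p ∈ P.T ∧ w ∈ Q.S := by
  by_cases hp : p ∈ P.T
  · rw [glueQOf_inl_pos m hp] at hw
    cases Option.some_inj.mp hw
    exact ⟨hp, (m.g ⟨p, hp⟩).2⟩
  · rw [glueQOf_inl_neg m hp] at hw; exact absurd hw (by simp)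

lemma identity_glue_iso (hS : P.S = Set.univ) (hT : P.T = Set.univ)
    (hlt : ∀ a b, ¬ P.lt a b) : Iso Q (glue P Q m) := by
  have hbij : Function.Bijective (secQ m) := by
    constructor
    · intro a b hab
      have := glueQOf_secQ m a
      rw [hab, glueQOf_secQ m b] at this
      exact (Option.some_inj.mp this).symm
    · intro u
      cases u with
      | inl x =>
        have hx : x ∈ P.T := hT ▸ Set.mem_univ x
        exact ⟨(m.g ⟨x, hx⟩).val, (eq_secQ_of_glueQOf m (glueQOf_inl_pos m hx)).symm⟩
      | inr y => exact ⟨y.val, (eq_secQ_of_glueQOf m (glueQOf_inr m y)).symm⟩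
  refine ⟨Equiv.ofBijective _ hbij, fun a b => ?_, fun a b => ?_, fun a => ?_, fun a => ?_,
    fun a => ?_⟩
  · show Q.lt a b ↔ (glue P Q m).lt (secQ m a) (secQ m b)
    erw [glue_lt_iff]
    constructor
    · intro h; exact Or.inr (Or.inl ⟨a, b, glueQOf_secQ m a, glueQOf_secQ m b, h⟩)
    · rintro (⟨p, p', _, _, h⟩ | ⟨w, w', hw, hw', h⟩ | ⟨⟨p, hp1, hp2⟩, _⟩)
      · exact absurd h (hlt _ _)
      · rw [glueQOf_secQ] at hw hw'
        cases Option.some_inj.mp hw; cases Option.some_inj.mp hw'; exact h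
      · exact absurd (hT ▸ Set.mem_univ p) hp2
  · show Q.evord a b ↔ (glue P Q m).evord (secQ m a) (secQ m b)
    erw [glue_evord_iff]
    constructor
    · intro h; exact Or.inr ⟨a, b, glueQOf_secQ m a, glueQOf_secQ m b, h⟩
    · rintro (⟨p, p', hp, hp', h⟩ | ⟨w, w', hw, hw', h⟩)
      · have h1 := glueQOf_secQ m a
        have h2 := glueQOf_secQ m b
        rw [hp] at h1; rw [hp'] at h2
        exact (glueQOf_inl_evord m h1 h2).mp h
      · rw [glueQOf_secQ] at hw hw'
        cases Option.some_inj.mp hw; cases Option.some_inj.mp hw'; exact h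
  · show a ∈ Q.S ↔ secQ m a ∈ (glue P Q m).S
    erw [glue_S_iff, ← secQ_mem_S_iff m a]
    constructor
    · rintro ⟨p, hp⟩; exact ⟨p, hp, hS ▸ Set.mem_univ p⟩
    · rintro ⟨p, hp, -⟩; exact ⟨p, hp⟩
  · show a ∈ Q.T ↔ secQ m a ∈ (glue P Q m).T
    erw [glue_T_iff]
    constructor
    · intro h; exact ⟨a, glueQOf_secQ m a, h⟩
    · rintro ⟨w, hw, h⟩
      rw [glueQOf_secQ] at hw; cases Option.some_inj.mp hw; exact h
  · show (glue P Q m).lab (secQ m a) = Q.lab a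
    rcases hu : secQ m a with x | y
    · have h1 := glueQOf_secQ m a
      rw [hu] at h1
      exact (glueQOf_inl_lab m h1).symm
    · have h1 := glueQOf_secQ m a
      rw [hu, glueQOf_inr] at h1
      rw [glue_lab_inr, Option.some_inj.mp h1]

lemma identity_glueRel_iso {R : PreIpomset σ} (hS : P.S = Set.univ) (hT : P.T = Set.univ)
    (hlt : ∀ a b, ¬ P.lt a b) (h : GlueRel P Q R) : Iso Q R := by
  obtain ⟨m, hm⟩ := h
  exact (identity_glue_iso m hS hT hlt).trans hm

end GlueMore

end PreIpomset

section PHDAFacts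

variable {σ : Type} {X : PrePHDA σ}

lemma rec_iso {x z : X.cell} {α : X.Path x z} {R R' : PreIpomset σ}
    (h : X.Rec α R) (hi : Iso R R') : X.Rec α R' := by
  cases h with
  | nil _ _ h0 => exact .nil _ _ (h0.trans hi)
  | up y A hf rest h1 h2 => exact .up _ _ hf rest h1 (h2.iso_right hi)
  | down y B hf rest h1 h2 => exact .down _ _ hf rest h1 (h2.iso_right hi)

lemma ev_discrete (hX : X.IsPHDA) (x : X.cell) : (X.ev x).Discrete := (hX.1 x).2.1

lemma rec_src_min (hX : X.IsPHDA) {s x : X.cell} {α : X.Path s x} {R : PreIpomset σ}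
    (h : X.Rec α R) : ∀ u ∈ R.S, ∀ v, ¬ R.lt v u := by
  induction h with
  | nil y R h0 =>
    obtain ⟨f, h1, h2, h3, h4, h5⟩ := h0
    intro u hu v hlt
    have : ((X.ev y).idOf).lt (f.symm v) (f.symm u) := by
      rw [h1]; simpa using hlt
    exact ev_discrete hX y _ _ this
  | up y A hf rest h1 h2 ih =>
    obtain ⟨m, f, i1, i2, i3, i4, i5⟩ := h2
    intro u hu v hlt
    have hu' : f.symm u ∈ (glue _ _ m).S := by rw [i3]; simpa using hu
    have hlt' : (glue _ _ m).lt (f.symm v) (f.symm u) := by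
      rw [i1]; simpa using hlt
    rw [glue_S_iff] at hu'
    obtain ⟨p, hp1, -⟩ := hu'
    have hq : glueQOf _ _ m (f.symm u) =
        some ((m.g ⟨p, Set.mem_univ p⟩).val) := by
      rw [hp1]; exact glueQOf_inl_pos m (Set.mem_univ p)
    rw [glue_lt_iff] at hlt'
    rcases hlt' with ⟨a, b, ha, hb, hab⟩ | ⟨w, w', hw, hw', hww⟩ | ⟨-, ⟨w, hw, hwS⟩⟩
    · exact ev_discrete hX y a b hab
    · rw [hq] at hw'
      cases Option.some_inj.mp hw'
      exact ih _ (m.g ⟨p, Set.mem_univ p⟩).2 _ hww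
    · rw [hq] at hw
      cases Option.some_inj.mp hw
      exact hwS (m.g ⟨p, Set.mem_univ p⟩).2
  | down y B hf rest h1 h2 ih =>
    obtain ⟨m, f, i1, i2, i3, i4, i5⟩ := h2
    intro u hu v hlt
    have hu' : f.symm u ∈ (glue _ _ m).S := by rw [i3]; simpa using hu
    have hlt' : (glue _ _ m).lt (f.symm v) (f.symm u) := by
      rw [i1]; simpa using hlt
    rw [glue_S_iff] at hu'
    obtain ⟨p, hp1, -⟩ := hu'
    rw [glue_lt_iff] at hlt'
    by_cases hp : p ∈ ((X.ev y).terminator B).T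
    · have hq : glueQOf _ _ m (f.symm u) = some ((m.g ⟨p, hp⟩).val) := by
        rw [hp1]; exact glueQOf_inl_pos m hp
      rcases hlt' with ⟨a, b, ha, hb, hab⟩ | ⟨w, w', hw, hw', hww⟩ | ⟨-, ⟨w, hw, hwS⟩⟩
      · exact ev_discrete hX y a b hab
      · rw [hq] at hw'
        cases Option.some_inj.mp hw'
        exact ih _ (m.g ⟨p, hp⟩).2 _ hww
      · rw [hq] at hw
        cases Option.some_inj.mp hw
        exact hwS (m.g ⟨p, hp⟩).2
    · have hq : glueQOf _ _ m (f.symm u) = none := by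
        rw [hp1]; exact glueQOf_inl_neg m hp
      rcases hlt' with ⟨a, b, ha, hb, hab⟩ | ⟨w, w', hw, hw', hww⟩ | ⟨-, ⟨w, hw, hwS⟩⟩
      · exact ev_discrete hX y a b hab
      · rw [hq] at hw'; exact absurd hw' (by simp)
      · rw [hq] at hw; exact absurd hw (by simp)

lemma rec_src (hX : X.IsPHDA) {s x : X.cell} {α : X.Path s x} {R : PreIpomset σ}
    (h : X.Rec α R) :
    ∃ e : (X.ev s).carrier → R.carrier, Function.Injective e ∧ (∀ a, e a ∈ R.S) ∧
      (∀ u ∈ R.S, ∃ a, e a = u) ∧ (∀ a b, (X.ev s).evord a b ↔ R.evord (e a) (e b)) ∧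
      (∀ a, R.lab (e a) = (X.ev s).lab a) := by
  cases h with
  | nil _ R h0 =>
    obtain ⟨f, h1, h2, h3, h4, h5⟩ := h0
    refine ⟨f, f.injective, fun a => (h3 a).mp (Set.mem_univ a), fun u hu => ⟨f.symm u, by simp⟩,
      h2, h5⟩
  | up y A hf rest h1 h2 =>
    obtain ⟨-, g, ginj, grange, gevord, glab⟩ := hX.2.2.1 y A ∅ s hf
    obtain ⟨m, f, i1, i2, i3, i4, i5⟩ := h2
    have hgmem : ∀ a, g a ∈ ((X.ev y).starter A).S := by
      intro a
      have : g a ∈ Set.range g := ⟨a, rfl⟩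
      rw [grange] at this
      exact (by simpa [Set.union_empty] using this : g a ∉ A)
    refine ⟨fun a => f (Sum.inl (g a)), ?_, ?_, ?_, ?_, ?_⟩
    · exact f.injective.comp (Sum.inl_injective.comp ginj)
    · intro a
      erw [← i3]
      exact (glue_S_iff m _).mpr ⟨g a, rfl, hgmem a⟩
    · intro u hu
      have hu' : f.symm u ∈ (glue _ _ m).S := by rw [i3]; simpa using hu
      rw [glue_S_iff] at hu'
      obtain ⟨p, hp1, hp2⟩ := hu'
      have : p ∈ Set.range g := by
        rw [grange]
        exact fun h => hp2 (Or.resolve_right h id)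
      obtain ⟨a, ha⟩ := this
      refine ⟨a, ?_⟩
      show f (Sum.inl (g a)) = u
      rw [ha, ← hp1]
      exact f.apply_symm_apply u
    · intro a b
      erw [gevord a b, ← i2, glue_evord_inl_inl]
      exact Iff.rfl
    · intro a
      erw [i5, ← glab a]
      rfl
  | down y B hf rest h1 h2 =>
    obtain ⟨m, f, i1, i2, i3, i4, i5⟩ := h2
    refine ⟨fun a => f (Sum.inl a), ?_, ?_, ?_, ?_, ?_⟩
    · exact f.injective.comp Sum.inl_injective
    · intro a
      erw [← i3]
      exact (glue_S_iff m _).mpr ⟨a, rfl, Set.mem_univ a⟩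
    · intro u hu
      have hu' : f.symm u ∈ (glue _ _ m).S := by rw [i3]; simpa using hu
      rw [glue_S_iff] at hu'
      obtain ⟨p, hp1, -⟩ := hu'
      refine ⟨p, ?_⟩
      show f (Sum.inl p) = u
      rw [← hp1]
      exact f.apply_symm_apply u
    · intro a b
      erw [← i2, glue_evord_inl_inl]
      exact Iff.rfl
    · intro a
      erw [i5]
      rfl

end PHDAFacts

namespace PreIpomset

variable {σ : Type}

section Positional

variable {P Q : PreIpomset σ} (m : Matching P Q)

lemma exists_glueQOf_inl {x : P.carrier} {Φ : Q.carrier → Prop} :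
    (∃ w, glueQOf P Q m (Sum.inl x) = some w ∧ Φ w) ↔
      ∃ hx : x ∈ P.T, Φ (m.g ⟨x, hx⟩).val := by
  by_cases hx : x ∈ P.T
  · rw [glueQOf_inl_pos m hx]
    constructor
    · rintro ⟨w, hw, h⟩; cases Option.some_inj.mp hw; exact ⟨hx, h⟩
    · rintro ⟨hx', h⟩; exact ⟨_, rfl, h⟩
  · rw [glueQOf_inl_neg m hx]
    simp [hx]

lemma glue_lt_inl_inl (hQ : Q.Discrete) (p p' : P.carrier) :
    (glue P Q m).lt (Sum.inl p) (Sum.inl p') ↔ P.lt p p' := by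
  erw [glue_lt_iff]
  constructor
  · rintro (⟨a, b, ha, hb, h⟩ | ⟨w, w', hw, hw', h⟩ | ⟨-, ⟨w, hw, hwS⟩⟩)
    · cases ha; cases hb; exact h
    · exact absurd h (hQ _ _)
    · exact absurd ((glueQOf_inl_mem_T m hw).2) hwS
  · intro h; exact Or.inl ⟨p, p', rfl, rfl, h⟩

lemma glue_lt_inl_inr (hQ : Q.Discrete) (p : P.carrier) (y : {y : Q.carrier // y ∉ Q.S}) :
    (glue P Q m).lt (Sum.inl p) (Sum.inr y) ↔ p ∉ P.T := by
  erw [glue_lt_iff]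
  constructor
  · rintro (⟨a, b, ha, hb, h⟩ | ⟨w, w', hw, hw', h⟩ | ⟨⟨a, ha, haT⟩, -⟩)
    · exact absurd hb (by simp)
    · exact absurd h (hQ _ _)
    · cases ha; exact haT
  · intro h
    exact Or.inr (Or.inr ⟨⟨p, rfl, h⟩, ⟨y.val, glueQOf_inr m y, y.2⟩⟩)

lemma glue_lt_not_inr (hQ : Q.Discrete) (y : {y : Q.carrier // y ∉ Q.S})
    (v : (glue P Q m).carrier) : ¬ (glue P Q m).lt (Sum.inr y) v := by
  erw [glue_lt_iff]
  rintro (⟨a, b, ha, hb, h⟩ | ⟨w, w', hw, hw', h⟩ | ⟨⟨a, ha, haT⟩, -⟩)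
  · exact absurd ha (by simp)
  · exact hQ _ _ h
  · exact absurd ha (by simp)

lemma glue_lt_left_inl_inl (hP : P.Discrete) (x x' : P.carrier) :
    (glue P Q m).lt (Sum.inl x) (Sum.inl x') ↔
      ∃ (hx : x ∈ P.T) (hx' : x' ∈ P.T), Q.lt (m.g ⟨x, hx⟩).val (m.g ⟨x', hx'⟩).val := by
  erw [glue_lt_iff]
  constructor
  · rintro (⟨a, b, ha, hb, h⟩ | ⟨w, w', hw, hw', h⟩ | ⟨-, ⟨w, hw, hwS⟩⟩)
    · exact absurd h (hP _ _)
    · obtain ⟨hx, hwS⟩ := glueQOf_inl_mem_T m hw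
      obtain ⟨hx', hwS'⟩ := glueQOf_inl_mem_T m hw'
      rw [glueQOf_inl_pos m hx] at hw
      rw [glueQOf_inl_pos m hx'] at hw'
      cases Option.some_inj.mp hw; cases Option.some_inj.mp hw'
      exact ⟨hx, hx', h⟩
    · exact absurd ((glueQOf_inl_mem_T m hw).2) hwS
  · rintro ⟨hx, hx', h⟩
    exact Or.inr (Or.inl ⟨_, _, glueQOf_inl_pos m hx, glueQOf_inl_pos m hx', h⟩)

lemma glue_lt_left_inl_inr (hP : P.Discrete) (x : P.carrier) (y : {y : Q.carrier // y ∉ Q.S}) :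
    (glue P Q m).lt (Sum.inl x) (Sum.inr y) ↔
      (∃ hx : x ∈ P.T, Q.lt (m.g ⟨x, hx⟩).val y.val) ∨ x ∉ P.T := by
  erw [glue_lt_iff]
  constructor
  · rintro (⟨a, b, ha, hb, h⟩ | ⟨w, w', hw, hw', h⟩ | ⟨⟨a, ha, haT⟩, -⟩)
    · exact absurd hb (by simp)
    · obtain ⟨hx, -⟩ := glueQOf_inl_mem_T m hw
      rw [glueQOf_inl_pos m hx] at hw
      rw [glueQOf_inr m y] at hw'
      cases Option.some_inj.mp hw; cases Option.some_inj.mp hw'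
      exact Or.inl ⟨hx, h⟩
    · cases ha; exact Or.inr haT
  · rintro (⟨hx, h⟩ | h)
    · exact Or.inr (Or.inl ⟨_, _, glueQOf_inl_pos m hx, glueQOf_inr m y, h⟩)
    · exact Or.inr (Or.inr ⟨⟨x, rfl, h⟩, ⟨y.val, glueQOf_inr m y, y.2⟩⟩)

lemma glue_lt_left_inr_inl (x' : P.carrier) (y : {y : Q.carrier // y ∉ Q.S}) :
    (glue P Q m).lt (Sum.inr y) (Sum.inl x') ↔
      ∃ hx' : x' ∈ P.T, Q.lt y.val (m.g ⟨x', hx'⟩).val := by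
  erw [glue_lt_iff]
  constructor
  · rintro (⟨a, b, ha, hb, h⟩ | ⟨w, w', hw, hw', h⟩ | ⟨⟨a, ha, haT⟩, -⟩)
    · exact absurd ha (by simp)
    · obtain ⟨hx', -⟩ := glueQOf_inl_mem_T m hw'
      rw [glueQOf_inl_pos m hx'] at hw'
      rw [glueQOf_inr m y] at hw
      cases Option.some_inj.mp hw; cases Option.some_inj.mp hw'
      exact ⟨hx', h⟩
    · exact absurd ha (by simp)
  · rintro ⟨hx', h⟩
    exact Or.inr (Or.inl ⟨_, _, glueQOf_inr m y, glueQOf_inl_pos m hx', h⟩)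

lemma glue_lt_left_inr_inr (y y' : {y : Q.carrier // y ∉ Q.S}) :
    (glue P Q m).lt (Sum.inr y) (Sum.inr y') ↔ Q.lt y.val y'.val := by
  erw [glue_lt_iff]
  constructor
  · rintro (⟨a, b, ha, hb, h⟩ | ⟨w, w', hw, hw', h⟩ | ⟨⟨a, ha, haT⟩, -⟩)
    · exact absurd ha (by simp)
    · rw [glueQOf_inr m y] at hw; rw [glueQOf_inr m y'] at hw'
      cases Option.some_inj.mp hw; cases Option.some_inj.mp hw'
      exact h
    · exact absurd ha (by simp)
  · intro h
    exact Or.inr (Or.inl ⟨_, _, glueQOf_inr m y, glueQOf_inr m y', h⟩)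

lemma glue_evord_inl_inr (p : P.carrier) (y : {y : Q.carrier // y ∉ Q.S}) :
    (glue P Q m).evord (Sum.inl p) (Sum.inr y) ↔
      ∃ hp : p ∈ P.T, Q.evord (m.g ⟨p, hp⟩).val y.val := by
  erw [glue_evord_iff]
  constructor
  · rintro (⟨a, b, ha, hb, h⟩ | ⟨w, w', hw, hw', h⟩)
    · exact absurd hb (by simp)
    · obtain ⟨hp, -⟩ := glueQOf_inl_mem_T m hw
      rw [glueQOf_inl_pos m hp] at hw
      rw [glueQOf_inr m y] at hw'
      cases Option.some_inj.mp hw; cases Option.some_inj.mp hw'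
      exact ⟨hp, h⟩
  · rintro ⟨hp, h⟩
    exact Or.inr ⟨_, _, glueQOf_inl_pos m hp, glueQOf_inr m y, h⟩

lemma glue_evord_inr_inl (p : P.carrier) (y : {y : Q.carrier // y ∉ Q.S}) :
    (glue P Q m).evord (Sum.inr y) (Sum.inl p) ↔
      ∃ hp : p ∈ P.T, Q.evord y.val (m.g ⟨p, hp⟩).val := by
  erw [glue_evord_iff]
  constructor
  · rintro (⟨a, b, ha, hb, h⟩ | ⟨w, w', hw, hw', h⟩)
    · exact absurd ha (by simp)
    · obtain ⟨hp, -⟩ := glueQOf_inl_mem_T m hw'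
      rw [glueQOf_inl_pos m hp] at hw'
      rw [glueQOf_inr m y] at hw
      cases Option.some_inj.mp hw; cases Option.some_inj.mp hw'
      exact ⟨hp, h⟩
  · rintro ⟨hp, h⟩
    exact Or.inr ⟨_, _, glueQOf_inr m y, glueQOf_inl_pos m hp, h⟩

lemma glue_evord_inr_inr (y y' : {y : Q.carrier // y ∉ Q.S}) :
    (glue P Q m).evord (Sum.inr y) (Sum.inr y') ↔ Q.evord y.val y'.val := by
  erw [glue_evord_iff]
  constructor
  · rintro (⟨a, b, ha, hb, h⟩ | ⟨w, w', hw, hw', h⟩)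
    · exact absurd ha (by simp)
    · rw [glueQOf_inr m y] at hw; rw [glueQOf_inr m y'] at hw'
      cases Option.some_inj.mp hw; cases Option.some_inj.mp hw'
      exact h
  · intro h
    exact Or.inr ⟨_, _, glueQOf_inr m y, glueQOf_inr m y', h⟩

lemma glue_T_inl (x : P.carrier) :
    Sum.inl x ∈ (glue P Q m).T ↔ ∃ hx : x ∈ P.T, (m.g ⟨x, hx⟩).val ∈ Q.T := by
  erw [glue_T_iff]; exact exists_glueQOf_inl m

lemma glue_T_inr (y : {y : Q.carrier // y ∉ Q.S}) :
    Sum.inr y ∈ (glue P Q m).T ↔ y.val ∈ Q.T := by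
  erw [glue_T_iff]
  constructor
  · rintro ⟨w, hw, h⟩; rw [glueQOf_inr m y] at hw; cases Option.some_inj.mp hw; exact h
  · intro h; exact ⟨y.val, glueQOf_inr m y, h⟩

lemma glue_S_inl (x : P.carrier) :
    Sum.inl x ∈ (glue P Q m).S ↔ x ∈ P.S := by
  erw [glue_S_iff]
  constructor
  · rintro ⟨p, hp, h⟩; cases Sum.inl_injective hp; exact h
  · intro h; exact ⟨x, rfl, h⟩

lemma glue_S_not_inr (y : {y : Q.carrier // y ∉ Q.S}) :
    Sum.inr y ∉ (glue P Q m).S := by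
  erw [glue_S_iff]
  rintro ⟨p, hp, -⟩
  exact absurd hp (by simp)

lemma secQ_of_memS {w : Q.carrier} (hw : w ∈ Q.S) :
    secQ m w = Sum.inl (m.g.symm ⟨w, hw⟩).val := dif_pos hw

lemma secQ_of_not_memS {w : Q.carrier} (hw : w ∉ Q.S) :
    secQ m w = Sum.inr ⟨w, hw⟩ := dif_neg hw

lemma secQ_g (x : {x : P.carrier // x ∈ P.T}) :
    secQ m (m.g x).val = Sum.inl x.val :=
  (eq_secQ_of_glueQOf m (by rw [glueQOf_inl_pos m x.2])).symm

end Positional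


/-- Auxiliary reassociation map used in `assoc_discrete`. -/
noncomputable def assocMap {σ : Type} {D P' P Q : PreIpomset σ} (m₃ : Matching P' Q)
    (j : D.carrier → P.carrier) (ι : P'.carrier → P.carrier)
    (u : D.carrier ⊕ {u : (glue P' Q m₃).carrier // u ∉ (glue P' Q m₃).S}) :
    P.carrier ⊕ {y : Q.carrier // y ∉ Q.S} :=
  match u with
  | Sum.inl x => Sum.inl (j x)
  | Sum.inr uu => Sum.elim (fun w => Sum.inl (ι w)) (fun y => Sum.inr y) uu.val

lemma assoc_discrete {D P' P Q R : PreIpomset σ}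
    (hD : D.Discrete) (hQ : Q.Discrete)
    (h1 : GlueRel D P' P) (h2 : GlueRel P Q R) :
    ∃ R', GlueRel P' Q R' ∧ GlueRel D R' R := by
  classical
  obtain ⟨m₁, f₁, a1, a2, a3, a4, a5⟩ := h1
  obtain ⟨m₂, f₂, b1, b2, b3, b4, b5⟩ := h2
  -- the matching P' ≃ Q through P
  have hmem3 : ∀ w : {w : P'.carrier // w ∈ P'.T}, f₁ (secQ m₁ w.val) ∈ P.T := by
    intro w
    erw [← a4]
    exact ⟨w.val, glueQOf_secQ m₁ w.val, w.2⟩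
  set t3 : {w : P'.carrier // w ∈ P'.T} → {q : Q.carrier // q ∈ Q.S} :=
    fun w => m₂.g ⟨f₁ (secQ m₁ w.val), hmem3 w⟩ with ht3
  have t3bij : Function.Bijective t3 := by
    constructor
    · intro w c hwc
      have h1' : (⟨f₁ (secQ m₁ w.val), hmem3 w⟩ : {p // p ∈ P.T}) =
          ⟨f₁ (secQ m₁ c.val), hmem3 c⟩ := m₂.g.injective hwc
      have h2' := congrArg Subtype.val h1'
      have h3' := f₁.injective h2'
      have h4' := glueQOf_secQ m₁ w.val
      rw [h3', glueQOf_secQ m₁ c.val] at h4'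
      exact Subtype.ext (Option.some_inj.mp h4').symm
    · intro q
      have hp : (m₂.g.symm q).val ∈ P.T := (m₂.g.symm q).2
      have hT : f₁.symm (m₂.g.symm q).val ∈ (glue D P' m₁).T := by
        rw [a4, f₁.apply_symm_apply]; exact hp
      obtain ⟨w, hw, hwT⟩ := (glue_T_iff m₁ _).mp hT
      refine ⟨⟨w, hwT⟩, ?_⟩
      have hsec : secQ m₁ w = f₁.symm (m₂.g.symm q).val := (eq_secQ_of_glueQOf m₁ hw).symm
      have : (⟨f₁ (secQ m₁ w), hmem3 ⟨w, hwT⟩⟩ : {p // p ∈ P.T}) = m₂.g.symm q := by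
        apply Subtype.ext
        show f₁ (secQ m₁ w) = (m₂.g.symm q).val
        rw [hsec, f₁.apply_symm_apply]
      rw [ht3]
      show m₂.g ⟨f₁ (secQ m₁ w), _⟩ = q
      rw [this, m₂.g.apply_symm_apply]
  set g3 := Equiv.ofBijective t3 t3bij with hg3
  have hg3app : ∀ w, g3 w = t3 w := fun w => rfl
  have ev3 : ∀ w c : {w : P'.carrier // w ∈ P'.T},
      P'.evord w.val c.val ↔ Q.evord (g3 w).val (g3 c).val := by
    intro w c
    rw [hg3app, hg3app, ht3]
    show P'.evord w.val c.val ↔ Q.evord (m₂.g _).val (m₂.g _).val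
    erw [← m₂.evord_iff, ← a2]
    erw [glue_evord_iff]
    constructor
    · intro h
      exact Or.inr ⟨w.val, c.val, glueQOf_secQ m₁ w.val, glueQOf_secQ m₁ c.val, h⟩
    · rintro (⟨p, p', hp, hp', h⟩ | ⟨v, v', hv, hv', h⟩)
      · have h1' := glueQOf_secQ m₁ w.val
        have h2' := glueQOf_secQ m₁ c.val
        rw [hp] at h1'; rw [hp'] at h2'
        exact (glueQOf_inl_evord m₁ h1' h2').mp h
      · have h1' := glueQOf_secQ m₁ w.val
        have h2' := glueQOf_secQ m₁ c.val
        rw [hv] at h1'; rw [hv'] at h2'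
        cases Option.some_inj.mp h1'; cases Option.some_inj.mp h2'
        exact h
  have lab3 : ∀ w : {w : P'.carrier // w ∈ P'.T}, Q.lab (g3 w).val = P'.lab w.val := by
    intro w
    rw [hg3app, ht3]
    show Q.lab (m₂.g _).val = P'.lab w.val
    erw [m₂.lab_eq, a5]
    rcases hu : secQ m₁ w.val with p | yy
    · have h1' := glueQOf_secQ m₁ w.val
      rw [hu] at h1'
      rw [glue_lab_inl]
      exact (glueQOf_inl_lab m₁ h1').symm
    · have h1' := glueQOf_secQ m₁ w.val
      rw [hu, glueQOf_inr] at h1'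
      rw [glue_lab_inr, Option.some_inj.mp h1']
  set m₃ : Matching P' Q := ⟨g3, ev3, lab3⟩ with hm₃
  refine ⟨glue P' Q m₃, ⟨m₃, iso_rfl _⟩, ?_⟩
  -- the matching D ≃ S(glue P' Q m₃)
  have hmem4 : ∀ x : {x : D.carrier // x ∈ D.T},
      (Sum.inl (m₁.g x).val : (glue P' Q m₃).carrier) ∈ (glue P' Q m₃).S :=
    fun x => (glue_S_inl m₃ _).mpr (m₁.g x).2
  set t4 : {x : D.carrier // x ∈ D.T} → {u : (glue P' Q m₃).carrier // u ∈ (glue P' Q m₃).S} :=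
    fun x => ⟨Sum.inl (m₁.g x).val, hmem4 x⟩ with ht4
  have t4bij : Function.Bijective t4 := by
    constructor
    · intro x x' h
      have := congrArg Subtype.val h
      exact m₁.g.injective (Subtype.ext (Sum.inl_injective this))
    · rintro ⟨u, hu⟩
      rw [glue_S_iff] at hu
      obtain ⟨w, rfl, hw⟩ := hu
      refine ⟨m₁.g.symm ⟨w, hw⟩, ?_⟩
      apply Subtype.ext
      show Sum.inl ((m₁.g (m₁.g.symm ⟨w, hw⟩)).val) = Sum.inl w
      rw [m₁.g.apply_symm_apply]
  set g4 := Equiv.ofBijective t4 t4bij with hg4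
  have ev4 : ∀ x y : {x : D.carrier // x ∈ D.T},
      D.evord x.val y.val ↔ (glue P' Q m₃).evord (g4 x).val (g4 y).val := by
    intro x y
    show D.evord x.val y.val ↔
      (glue P' Q m₃).evord (Sum.inl (m₁.g x).val) (Sum.inl (m₁.g y).val)
    rw [glue_evord_inl_inl m₃]
    exact m₁.evord_iff x y
  have lab4 : ∀ x : {x : D.carrier // x ∈ D.T},
      (glue P' Q m₃).lab (g4 x).val = D.lab x.val := by
    intro x
    show (glue P' Q m₃).lab (Sum.inl (m₁.g x).val) = D.lab x.val
    rw [glue_lab_inl m₃]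
    exact m₁.lab_eq x
  set m₄ : Matching D (glue P' Q m₃) := ⟨g4, ev4, lab4⟩ with hm₄
  refine ⟨m₄, ?_⟩
  -- now the iso (glue D (glue P' Q m₃) m₄) ≃ R, through glue P Q m₂
  have hnotS : ∀ (w : P'.carrier), (Sum.inl w : (glue P' Q m₃).carrier) ∉ (glue P' Q m₃).S →
      w ∉ P'.S := fun w h hw => h ((glue_S_inl m₃ w).mpr hw)
  have hθ1 : ∀ x, assocMap m₃ (fun x => f₁ (Sum.inl x)) (fun w => f₁ (secQ m₁ w))
      (Sum.inl x) = Sum.inl (f₁ (Sum.inl x)) := fun _ => rfl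
  have hθ2 : ∀ w h, assocMap m₃ (fun x => f₁ (Sum.inl x)) (fun w => f₁ (secQ m₁ w))
      (Sum.inr ⟨Sum.inl w, h⟩) = Sum.inl (f₁ (Sum.inr ⟨w, hnotS w h⟩)) := by
    intro w h
    show Sum.inl (f₁ (secQ m₁ w)) = _
    rw [secQ_of_not_memS m₁ (hnotS w h)]
  have hθ3 : ∀ y h, assocMap m₃ (fun x => f₁ (Sum.inl x)) (fun w => f₁ (secQ m₁ w))
      (Sum.inr ⟨Sum.inr y, h⟩ :
        (glue D (glue P' Q m₃) m₄).carrier) = Sum.inr y := fun _ _ => rfl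
  have θbij : Function.Bijective (assocMap (D := D) m₃ (fun x => f₁ (Sum.inl x)) (fun w => f₁ (secQ m₁ w))) := by
    constructor
    · rintro (x | ⟨w | y, h⟩) (x' | ⟨w' | y', h'⟩) huv
      · rw [hθ1 x, hθ1 x'] at huv
        cases f₁.injective (Sum.inl_injective huv); rfl
      · rw [hθ1 x, hθ2 w' h'] at huv
        exact absurd (f₁.injective (Sum.inl_injective huv)) (by simp)
      · rw [hθ1 x, hθ3 y' h'] at huv
        exact absurd huv (by simp)
      · rw [hθ2 w h, hθ1 x'] at huv
        exact absurd (f₁.injective (Sum.inl_injective huv)) (by simp)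
      · rw [hθ2 w h, hθ2 w' h'] at huv
        have h9 := f₁.injective (Sum.inl_injective huv)
        have h10 := congrArg Subtype.val (Sum.inr_injective h9)
        simp only at h10
        cases h10; rfl
      · rw [hθ2 w h, hθ3 y' h'] at huv
        exact absurd huv (by simp)
      · rw [hθ3 y h, hθ1 x'] at huv
        exact absurd huv (by simp)
      · rw [hθ3 y h, hθ2 w' h'] at huv
        exact absurd huv (by simp)
      · rw [hθ3 y h, hθ3 y' h'] at huv
        cases Sum.inr_injective huv; rfl
    · rintro (p | y)
      · rcases hv : f₁.symm p with x | ⟨w, hw⟩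
        · refine ⟨Sum.inl x, ?_⟩
          rw [hθ1, ← hv, f₁.apply_symm_apply]
        · have hw' : (Sum.inl w : (glue P' Q m₃).carrier) ∉ (glue P' Q m₃).S :=
            fun hmem => hw ((glue_S_inl m₃ w).mp hmem)
          refine ⟨Sum.inr ⟨Sum.inl w, hw'⟩, ?_⟩
          rw [hθ2]
          have hval : f₁ (Sum.inr ⟨w, hw⟩) = p := by
            rw [← hv]; exact f₁.apply_symm_apply p
          exact congrArg Sum.inl hval
      · exact ⟨Sum.inr ⟨Sum.inr y, glue_S_not_inr m₃ y⟩, hθ3 y _⟩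
  have isoPQ : Iso (glue P Q m₂) R := ⟨f₂, b1, b2, b3, b4, b5⟩
  -- key bridging facts
  have hfT : ∀ x, f₁ (Sum.inl x) ∈ P.T ↔
      ∃ hx : x ∈ D.T, (m₁.g ⟨x, hx⟩).val ∈ P'.T := by
    intro x
    erw [← a4]
    exact exists_glueQOf_inl m₁
  have hfT' : ∀ (w) (hw : w ∉ P'.S), f₁ (Sum.inr ⟨w, hw⟩) ∈ P.T ↔ w ∈ P'.T := by
    intro w hw
    erw [← a4, glue_T_iff]
    constructor
    · rintro ⟨v, hv, h⟩
      rw [glueQOf_inr] at hv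
      cases Option.some_inj.mp hv; exact h
    · intro h; exact ⟨w, glueQOf_inr m₁ _, h⟩
  have hq4inl : ∀ (x) (hx : x ∈ D.T), glueQOf D (glue P' Q m₃) m₄ (Sum.inl x) =
      some (Sum.inl (m₁.g ⟨x, hx⟩).val) := by
    intro x hx
    rw [glueQOf_inl_pos m₄ hx]
    rfl
  have hm3g : ∀ (x) (hx : x ∈ D.T) (hw : (m₁.g ⟨x, hx⟩).val ∈ P'.T)
      (hp : f₁ (Sum.inl x) ∈ P.T),
      (m₃.g ⟨(m₁.g ⟨x, hx⟩).val, hw⟩).val = (m₂.g ⟨f₁ (Sum.inl x), hp⟩).val := by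
    intro x hx hw hp
    have : (⟨f₁ (secQ m₁ (m₁.g ⟨x, hx⟩).val), hmem3 ⟨(m₁.g ⟨x, hx⟩).val, hw⟩⟩ :
        {p // p ∈ P.T}) = ⟨f₁ (Sum.inl x), hp⟩ := by
      apply Subtype.ext
      show f₁ (secQ m₁ (m₁.g ⟨x, hx⟩).val) = f₁ (Sum.inl x)
      rw [secQ_g m₁ ⟨x, hx⟩]
    exact congrArg (fun z => (m₂.g z).val) this
  have hm3g' : ∀ (w) (hw : w ∉ P'.S) (hw' : w ∈ P'.T)
      (hp : f₁ (Sum.inr ⟨w, hw⟩) ∈ P.T),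
      (m₃.g ⟨w, hw'⟩).val = (m₂.g ⟨f₁ (Sum.inr ⟨w, hw⟩), hp⟩).val := by
    intro w hw hw' hp
    have : (⟨f₁ (secQ m₁ w), hmem3 ⟨w, hw'⟩⟩ : {p // p ∈ P.T}) =
        ⟨f₁ (Sum.inr ⟨w, hw⟩), hp⟩ := by
      apply Subtype.ext
      show f₁ (secQ m₁ w) = f₁ (Sum.inr ⟨w, hw⟩)
      rw [secQ_of_not_memS m₁ hw]
    exact congrArg (fun z => (m₂.g z).val) this
  -- shape lemmas for the left-hand gluing
  have L11 : ∀ x x', (glue D (glue P' Q m₃) m₄).lt (Sum.inl x) (Sum.inl x') ↔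
      ∃ (hx : x ∈ D.T) (hx' : x' ∈ D.T),
        P'.lt (m₁.g ⟨x, hx⟩).val (m₁.g ⟨x', hx'⟩).val := by
    intro x x'
    rw [glue_lt_left_inl_inl m₄ hD]
    constructor
    · rintro ⟨hx, hx', hlt⟩; exact ⟨hx, hx', (glue_lt_inl_inl m₃ hQ _ _).mp hlt⟩
    · rintro ⟨hx, hx', hlt⟩; exact ⟨hx, hx', (glue_lt_inl_inl m₃ hQ _ _).mpr hlt⟩
  have L1w : ∀ x w h, (glue D (glue P' Q m₃) m₄).lt (Sum.inl x) (Sum.inr ⟨Sum.inl w, h⟩) ↔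
      (∃ hx : x ∈ D.T, P'.lt (m₁.g ⟨x, hx⟩).val w) ∨ x ∉ D.T := by
    intro x w h
    rw [glue_lt_left_inl_inr m₄ hD]
    constructor
    · rintro (⟨hx, hlt⟩ | hx)
      · exact Or.inl ⟨hx, (glue_lt_inl_inl m₃ hQ _ _).mp hlt⟩
      · exact Or.inr hx
    · rintro (⟨hx, hlt⟩ | hx)
      · exact Or.inl ⟨hx, (glue_lt_inl_inl m₃ hQ _ _).mpr hlt⟩
      · exact Or.inr hx
  have L1y : ∀ x y h, (glue D (glue P' Q m₃) m₄).lt (Sum.inl x) (Sum.inr ⟨Sum.inr y, h⟩) ↔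
      (∃ hx : x ∈ D.T, (m₁.g ⟨x, hx⟩).val ∉ P'.T) ∨ x ∉ D.T := by
    intro x y h
    rw [glue_lt_left_inl_inr m₄ hD]
    constructor
    · rintro (⟨hx, hlt⟩ | hx)
      · exact Or.inl ⟨hx, (glue_lt_inl_inr m₃ hQ _ _).mp hlt⟩
      · exact Or.inr hx
    · rintro (⟨hx, hlt⟩ | hx)
      · exact Or.inl ⟨hx, (glue_lt_inl_inr m₃ hQ _ _).mpr hlt⟩
      · exact Or.inr hx
  have Lw1 : ∀ w h x', (glue D (glue P' Q m₃) m₄).lt (Sum.inr ⟨Sum.inl w, h⟩) (Sum.inl x') ↔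
      ∃ hx' : x' ∈ D.T, P'.lt w (m₁.g ⟨x', hx'⟩).val := by
    intro w h x'
    rw [glue_lt_left_inr_inl m₄]
    constructor
    · rintro ⟨hx', hlt⟩; exact ⟨hx', (glue_lt_inl_inl m₃ hQ _ _).mp hlt⟩
    · rintro ⟨hx', hlt⟩; exact ⟨hx', (glue_lt_inl_inl m₃ hQ _ _).mpr hlt⟩
  have Lww : ∀ w h w' h', (glue D (glue P' Q m₃) m₄).lt (Sum.inr ⟨Sum.inl w, h⟩)
      (Sum.inr ⟨Sum.inl w', h'⟩) ↔ P'.lt w w' := by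
    intro w h w' h'
    rw [glue_lt_left_inr_inr m₄]
    exact glue_lt_inl_inl m₃ hQ _ _
  have Lwy : ∀ w h y h', (glue D (glue P' Q m₃) m₄).lt (Sum.inr ⟨Sum.inl w, h⟩)
      (Sum.inr ⟨Sum.inr y, h'⟩) ↔ w ∉ P'.T := by
    intro w h y h'
    rw [glue_lt_left_inr_inr m₄]
    exact glue_lt_inl_inr m₃ hQ _ _
  have Ly1 : ∀ y h v, ¬ (glue D (glue P' Q m₃) m₄).lt (Sum.inr ⟨Sum.inr y, h⟩) v := by
    intro y h v hlt
    rcases v with x' | ⟨w' | y', h'⟩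
    · exact glue_lt_not_inr m₃ hQ y _ ((glue_lt_left_inr_inl m₄ _ _).mp hlt).choose_spec
    · exact glue_lt_not_inr m₃ hQ y _ ((glue_lt_left_inr_inr m₄ _ _).mp hlt)
    · exact glue_lt_not_inr m₃ hQ y _ ((glue_lt_left_inr_inr m₄ _ _).mp hlt)
  -- left-hand glue₁ shape lemmas
  have K11 : ∀ x x', P.lt (f₁ (Sum.inl x)) (f₁ (Sum.inl x')) ↔
      ∃ (hx : x ∈ D.T) (hx' : x' ∈ D.T),
        P'.lt (m₁.g ⟨x, hx⟩).val (m₁.g ⟨x', hx'⟩).val := by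
    intro x x'
    erw [← a1, glue_lt_left_inl_inl m₁ hD]
  have K1w : ∀ x w hw, P.lt (f₁ (Sum.inl x)) (f₁ (Sum.inr ⟨w, hw⟩)) ↔
      (∃ hx : x ∈ D.T, P'.lt (m₁.g ⟨x, hx⟩).val w) ∨ x ∉ D.T := by
    intro x w hw
    erw [← a1, glue_lt_left_inl_inr m₁ hD]
  have Kw1 : ∀ w hw x', P.lt (f₁ (Sum.inr ⟨w, hw⟩)) (f₁ (Sum.inl x')) ↔
      ∃ hx' : x' ∈ D.T, P'.lt w (m₁.g ⟨x', hx'⟩).val := by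
    intro w hw x'
    erw [← a1, glue_lt_left_inr_inl m₁]
  have Kww : ∀ w hw w' hw', P.lt (f₁ (Sum.inr ⟨w, hw⟩)) (f₁ (Sum.inr ⟨w', hw'⟩)) ↔
      P'.lt w w' := by
    intro w hw w' hw'
    erw [← a1, glue_lt_left_inr_inr m₁]
  have bridge : ∀ (x) (Φ : Q.carrier → Prop),
      (∃ hp : f₁ (Sum.inl x) ∈ P.T, Φ (m₂.g ⟨f₁ (Sum.inl x), hp⟩).val) ↔
      (∃ (hx : x ∈ D.T) (hw : (m₁.g ⟨x, hx⟩).val ∈ P'.T),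
        Φ (m₃.g ⟨(m₁.g ⟨x, hx⟩).val, hw⟩).val) := by
    intro x Φ
    constructor
    · rintro ⟨hp, hq⟩
      obtain ⟨hx, hw⟩ := (hfT x).mp hp
      exact ⟨hx, hw, by rw [hm3g x hx hw hp]; exact hq⟩
    · rintro ⟨hx, hw, hq⟩
      have hp : f₁ (Sum.inl x) ∈ P.T := (hfT x).mpr ⟨hx, hw⟩
      exact ⟨hp, by rw [← hm3g x hx hw hp]; exact hq⟩
  have bridge' : ∀ (w) (hw : w ∉ P'.S) (Φ : Q.carrier → Prop),
      (∃ hp : f₁ (Sum.inr ⟨w, hw⟩) ∈ P.T, Φ (m₂.g ⟨f₁ (Sum.inr ⟨w, hw⟩), hp⟩).val) ↔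
      (∃ hw' : w ∈ P'.T, Φ (m₃.g ⟨w, hw'⟩).val) := by
    intro w hw Φ
    constructor
    · rintro ⟨hp, hq⟩
      have hw' := (hfT' w hw).mp hp
      exact ⟨hw', by rw [hm3g' w hw hw' hp]; exact hq⟩
    · rintro ⟨hw', hq⟩
      have hp : f₁ (Sum.inr ⟨w, hw⟩) ∈ P.T := (hfT' w hw).mpr hw'
      exact ⟨hp, by rw [← hm3g' w hw hw' hp]; exact hq⟩
  refine ⟨(Equiv.ofBijective _ θbij).trans f₂, ?_, ?_, ?_, ?_, ?_⟩
  · -- lt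
    intro u v
    show _ ↔ R.lt (f₂ ((assocMap (D := D) m₃ (fun x => f₁ (Sum.inl x)) (fun w => f₁ (secQ m₁ w))) u)) (f₂ ((assocMap (D := D) m₃ (fun x => f₁ (Sum.inl x)) (fun w => f₁ (secQ m₁ w))) v))
    erw [← b1]
    rcases u with x | ⟨w | y, h⟩ <;> rcases v with x' | ⟨w' | y', h'⟩ <;>
      simp only [hθ1, hθ2, hθ3]
    · rw [L11, glue_lt_inl_inl m₂ hQ, K11]
    · rw [L1w, glue_lt_inl_inl m₂ hQ, K1w]
    · rw [L1y, glue_lt_inl_inr m₂ hQ, hfT]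
      constructor
      · rintro (⟨hx, hT⟩ | hx) ⟨hx2, hT2⟩
        · exact hT hT2
        · exact hx hx2
      · intro hn
        by_cases hx : x ∈ D.T
        · exact Or.inl ⟨hx, fun hT => hn ⟨hx, hT⟩⟩
        · exact Or.inr hx
    · rw [Lw1, glue_lt_inl_inl m₂ hQ, Kw1]
    · rw [Lww, glue_lt_inl_inl m₂ hQ, Kww]
    · rw [Lwy, glue_lt_inl_inr m₂ hQ, hfT' w (hnotS w h)]
    · exact iff_of_false (Ly1 y h _) (glue_lt_not_inr m₂ hQ y _)
    · exact iff_of_false (Ly1 y h _) (glue_lt_not_inr m₂ hQ y _)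
    · exact iff_of_false (Ly1 y h _) (glue_lt_not_inr m₂ hQ y _)
  · -- evord
    intro u v
    show _ ↔ R.evord (f₂ ((assocMap (D := D) m₃ (fun x => f₁ (Sum.inl x)) (fun w => f₁ (secQ m₁ w))) u)) (f₂ ((assocMap (D := D) m₃ (fun x => f₁ (Sum.inl x)) (fun w => f₁ (secQ m₁ w))) v))
    erw [← b2]
    rcases u with x | ⟨w | y, h⟩ <;> rcases v with x' | ⟨w' | y', h'⟩ <;>
      simp only [hθ1, hθ2, hθ3]
    · erw [glue_evord_inl_inl m₄, glue_evord_inl_inl m₂, ← a2, glue_evord_inl_inl m₁]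
    · erw [glue_evord_inl_inr m₄, glue_evord_inl_inl m₂, ← a2, glue_evord_inl_inr m₁]
      constructor
      · rintro ⟨hx, hq⟩; exact ⟨hx, (glue_evord_inl_inl m₃ _ _).mp hq⟩
      · rintro ⟨hx, hq⟩; exact ⟨hx, (glue_evord_inl_inl m₃ _ _).mpr hq⟩
    · rw [glue_evord_inl_inr m₄, glue_evord_inl_inr m₂, bridge x (fun q => Q.evord q y'.val)]
      constructor
      · rintro ⟨hx, hq⟩
        obtain ⟨hw, hq'⟩ := (glue_evord_inl_inr m₃ _ _).mp hq
        exact ⟨hx, hw, hq'⟩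
      · rintro ⟨hx, hw, hq⟩
        exact ⟨hx, (glue_evord_inl_inr m₃ _ _).mpr ⟨hw, hq⟩⟩
    · erw [glue_evord_inr_inl m₄, glue_evord_inl_inl m₂, ← a2, glue_evord_inr_inl m₁]
      constructor
      · rintro ⟨hx', hq⟩; exact ⟨hx', (glue_evord_inl_inl m₃ _ _).mp hq⟩
      · rintro ⟨hx', hq⟩; exact ⟨hx', (glue_evord_inl_inl m₃ _ _).mpr hq⟩
    · erw [glue_evord_inr_inr m₄, glue_evord_inl_inl m₂, ← a2, glue_evord_inr_inr m₁]
      exact glue_evord_inl_inl m₃ _ _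
    · rw [glue_evord_inr_inr m₄, glue_evord_inl_inr m₂,
        bridge' w (hnotS w h) (fun q => Q.evord q y'.val)]
      exact glue_evord_inl_inr m₃ _ _
    · rw [glue_evord_inr_inl m₄, glue_evord_inr_inl m₂, bridge x' (fun q => Q.evord y.val q)]
      constructor
      · rintro ⟨hx', hq⟩
        obtain ⟨hw, hq'⟩ := (glue_evord_inr_inl m₃ _ _).mp hq
        exact ⟨hx', hw, hq'⟩
      · rintro ⟨hx', hw, hq⟩
        exact ⟨hx', (glue_evord_inr_inl m₃ _ _).mpr ⟨hw, hq⟩⟩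
    · rw [glue_evord_inr_inr m₄, glue_evord_inr_inl m₂,
        bridge' w' (hnotS w' h') (fun q => Q.evord y.val q)]
      exact glue_evord_inr_inl m₃ _ _
    · rw [glue_evord_inr_inr m₄, glue_evord_inr_inr m₂]
      exact glue_evord_inr_inr m₃ _ _
  · -- S
    intro u
    show _ ↔ f₂ ((assocMap (D := D) m₃ (fun x => f₁ (Sum.inl x)) (fun w => f₁ (secQ m₁ w))) u) ∈ R.S
    erw [← b3]
    rcases u with x | ⟨w | y, h⟩ <;> simp only [hθ1, hθ2, hθ3]
    · erw [glue_S_inl m₄, glue_S_inl m₂, ← a3, glue_S_inl m₁]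
    · exact iff_of_false (glue_S_not_inr m₄ _) (by
        erw [glue_S_inl m₂, ← a3]
        exact glue_S_not_inr m₁ _)
    · exact iff_of_false (glue_S_not_inr m₄ _) (glue_S_not_inr m₂ _)
  · -- T
    intro u
    show _ ↔ f₂ ((assocMap (D := D) m₃ (fun x => f₁ (Sum.inl x)) (fun w => f₁ (secQ m₁ w))) u) ∈ R.T
    erw [← b4]
    rcases u with x | ⟨w | y, h⟩ <;> simp only [hθ1, hθ2, hθ3]
    · erw [glue_T_inl m₄, glue_T_inl m₂, bridge x (fun q => q ∈ Q.T)]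
      constructor
      · rintro ⟨hx, hq⟩
        obtain ⟨hw, hq'⟩ := (glue_T_inl m₃ _).mp hq
        exact ⟨hx, hw, hq'⟩
      · rintro ⟨hx, hw, hq⟩
        exact ⟨hx, (glue_T_inl m₃ _).mpr ⟨hw, hq⟩⟩
    · erw [glue_T_inr m₄, glue_T_inl m₂, bridge' w (hnotS w h) (fun q => q ∈ Q.T)]
      exact glue_T_inl m₃ _
    · erw [glue_T_inr m₄, glue_T_inr m₂]
  · -- lab
    intro u
    show R.lab (f₂ ((assocMap (D := D) m₃ (fun x => f₁ (Sum.inl x)) (fun w => f₁ (secQ m₁ w))) u)) = _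
    erw [b5]
    rcases u with x | ⟨w | y, h⟩ <;> simp only [hθ1, hθ2, hθ3]
    · show P.lab (f₁ (Sum.inl x)) = _
      erw [a5]
      rfl
    · show P.lab (f₁ (Sum.inr ⟨w, hnotS w h⟩)) = _
      erw [a5]
      rfl
    · rfl

end PreIpomset

section CompRec

variable {σ : Type} {X : PrePHDA σ}

lemma idOf_facts (hX : X.IsPHDA) {s : X.cell} {P : PreIpomset σ}
    (h : Iso (X.ev s).idOf P) :
    P.S = Set.univ ∧ P.T = Set.univ ∧ ∀ a b, ¬ P.lt a b := by
  obtain ⟨f, h1, h2, h3, h4, h5⟩ := h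
  refine ⟨?_, ?_, ?_⟩
  · ext p
    simp only [Set.mem_univ, iff_true]
    have := (h3 (f.symm p)).mp (Set.mem_univ _)
    simpa using this
  · ext p
    simp only [Set.mem_univ, iff_true]
    have := (h4 (f.symm p)).mp (Set.mem_univ _)
    simpa using this
  · intro a b hab
    have : ((X.ev s).idOf).lt (f.symm a) (f.symm b) := by
      rw [h1]; simpa using hab
    exact ev_discrete hX s _ _ this

lemma comp_rec (hX : X.IsPHDA) {Q : PreIpomset σ} (hQ : Q.Discrete) :
    ∀ {s mm : X.cell} (α : X.Path s mm) {xx : X.cell} (β : X.Path mm xx)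
      (P R : PreIpomset σ),
      X.Rec α P → X.Rec β Q → GlueRel P Q R → X.Rec (α.comp β) R := by
  intro s mm α
  induction α with
  | nil z =>
    intro xx β P R hα hβ hg
    cases hα with
    | nil _ _ h0 =>
      obtain ⟨hS, hT, hlt⟩ := idOf_facts hX h0
      exact rec_iso hβ (identity_glueRel_iso hS hT hlt hg)
  | up y A hf rest ih =>
    intro xx β P R hα hβ hg
    cases hα
    rename_i R' h1 h2
    have hD : ((X.ev y).starter A).Discrete := ev_discrete hX y
    obtain ⟨R'', hg1, hg2⟩ := assoc_discrete hD hQ h2 hg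
    exact .up y A hf _ (ih β _ _ h1 hβ hg1) hg2
  | down y B hf rest ih =>
    intro xx β P R hα hβ hg
    cases hα
    rename_i R' h1 h2
    have hD : ((X.ev y).terminator B).Discrete := ev_discrete hX y
    obtain ⟨R'', hg1, hg2⟩ := assoc_discrete hD hQ h2 hg
    exact .down _ _ hf _ (ih β _ _ h1 hβ hg1) hg2

end CompRec

section InQFacts

variable {σ : Type}
open PreIpomset

lemma gluesTo_ne_nil {l : List (PreIpomset σ)} {R : PreIpomset σ} (h : GluesTo l R) :
    l ≠ [] := by
  cases h <;> simp

lemma gluesTo_goodR {l : List (PreIpomset σ)} {R : PreIpomset σ} (h : GluesTo l R) :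
    (∀ P ∈ l, P.Discrete) → ∀ L, l.getLast? = some L → (∃ x₀, x₀ ∉ L.T) →
    ∀ q, ∃ x, x ∉ R.T ∧ ¬ R.lt x q := by
  induction h with
  | single hiso =>
    rename_i P₀ R₀
    intro hdisc L hlast hex q
    have h9 : ([P₀] : List (PreIpomset σ)).getLast? = some P₀ := by
      rw [List.getLast?_eq_getLast_of_ne_nil (by simp)]
      rw [List.getLast_singleton]
    have hL : L = P₀ := by
      rw [h9] at hlast
      exact (Option.some_inj.mp hlast).symm
    subst hL
    obtain ⟨f, h1, h2, h3, h4, h5⟩ := hiso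
    obtain ⟨x₀, hx₀⟩ := hex
    refine ⟨f x₀, fun hmem => hx₀ ((h4 x₀).mpr hmem), fun hlt => ?_⟩
    have : L.lt (f.symm (f x₀)) (f.symm q) := by rw [h1]; simpa using hlt
    rw [f.symm_apply_apply] at this
    exact hdisc L (List.mem_singleton.mpr rfl) _ _ this
  | cons h1 h2 ih =>
    rename_i P₀ l' R' R₀
    intro hdisc L hlast hex q
    obtain ⟨m, f, i1, i2, i3, i4, i5⟩ := h2
    have hl' : l' ≠ [] := gluesTo_ne_nil h1
    have hlast' : l'.getLast? = some L := by
      obtain ⟨a, t, rfl⟩ := List.exists_cons_of_ne_nil hl'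
      rwa [List.getLast?_cons_cons] at hlast
    have hdisc' : ∀ P ∈ l', P.Discrete := fun P hP => hdisc P (List.mem_cons_of_mem _ hP)
    have hd0 : P₀.Discrete := hdisc P₀ (List.mem_cons_self)
    set u : (glue P₀ R' m).carrier := f.symm q with hu
    rcases hq : glueQOf P₀ R' m u with _ | w
    · -- u = inl x₀ with x₀ ∉ P₀.T
      refine ⟨f u, ?_, ?_⟩
      · intro hmem
        have : u ∈ (glue P₀ R' m).T := by rw [i4]; simpa using hmem
        obtain ⟨w, hw, -⟩ := (glue_T_iff m u).mp this
        rw [hq] at hw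
        exact absurd hw (by simp)
      · intro hlt
        have hlt' : (glue P₀ R' m).lt (f.symm (f u)) (f.symm q) := by
          rw [i1]; simpa using hlt
        rw [f.symm_apply_apply, ← hu] at hlt'
        rw [glue_lt_iff] at hlt'
        rcases hlt' with ⟨a, b, ha, hb, hab⟩ | ⟨w, w', hw, hw', hww⟩ | ⟨-, ⟨w, hw, hwS⟩⟩
        · exact hd0 _ _ hab
        · rw [hq] at hw'; exact absurd hw' (by simp)
        · rw [hq] at hw; exact absurd hw (by simp)
    · -- glueQOf u = some w; use ih at w
      obtain ⟨x, hxT, hxlt⟩ := ih hdisc' L hlast' hex w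
      refine ⟨f (secQ m x), ?_, ?_⟩
      · intro hmem
        have : secQ m x ∈ (glue P₀ R' m).T := by erw [i4]; simpa using hmem
        obtain ⟨w', hw', hw'T⟩ := (glue_T_iff m _).mp this
        rw [glueQOf_secQ m x] at hw'
        cases Option.some_inj.mp hw'
        exact hxT hw'T
      · intro hlt
        have hlt' : (glue P₀ R' m).lt (f.symm (f (secQ m x))) (f.symm q) := by
          rw [i1]; simpa using hlt
        erw [f.symm_apply_apply, ← hu] at hlt'
        erw [glue_lt_iff] at hlt'
        rcases hlt' with ⟨a, b, ha, hb, hab⟩ | ⟨w1, w1', hw1, hw1', hww⟩ | ⟨⟨a, ha, haT⟩, -⟩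
        · exact hd0 _ _ hab
        · rw [glueQOf_secQ m x] at hw1
          rw [hq] at hw1'
          cases Option.some_inj.mp hw1
          cases Option.some_inj.mp hw1'
          exact hxlt hww
        · rcases hs : secQ m x with p | yy
          · rw [hs] at ha
            cases Sum.inl_injective ha
            have := glueQOf_secQ m x
            rw [hs] at this
            exact haT (glueQOf_inl_mem_T m this).1
          · rw [hs] at ha
            exact absurd ha (by simp)

/-- From `InQ P` we obtain the inductive invariant used in the splitting lemma. -/
lemma inQ_invariant {P : PreIpomset σ} (hq : InQ P) :
    (P.S = Set.univ ∧ P.T = Set.univ ∧ ∀ a b, ¬ P.lt a b) ∨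
      ∀ q, ∃ x, x ∉ P.T ∧ ¬ P.lt x q := by
  obtain ⟨l, ⟨hglue, hcase⟩, hlast⟩ := hq
  rcases hcase with ⟨I, rfl, hI⟩ | ⟨hmem, -⟩
  · left
    cases hglue with
    | single hiso =>
      obtain ⟨f, h1, h2, h3, h4, h5⟩ := hiso
      obtain ⟨-, hdisc, hS, hT⟩ := hI
      refine ⟨?_, ?_, ?_⟩
      · ext p
        simp only [Set.mem_univ, iff_true]
        have := (h3 (f.symm p)).mp (by rw [hS]; exact Set.mem_univ _)
        simpa using this
      · ext p
        simp only [Set.mem_univ, iff_true]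
        have := (h4 (f.symm p)).mp (by rw [hT]; exact Set.mem_univ _)
        simpa using this
      · intro a b hab
        have : I.lt (f.symm a) (f.symm b) := by rw [h1]; simpa using hab
        exact hdisc _ _ this
    | cons h1 h2 => exact absurd (gluesTo_ne_nil h1) (by simp)
  · right
    have hne : l ≠ [] := gluesTo_ne_nil hglue
    obtain ⟨L, hL⟩ : ∃ L, l.getLast? = some L :=
      ⟨l.getLast hne, List.getLast?_eq_getLast_of_ne_nil hne⟩
    have hLmem : L ∈ l := by
      obtain ⟨h9, heq⟩ := List.mem_getLast?_eq_getLast (Option.mem_def.mpr hL)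
      exact heq ▸ List.getLast_mem h9
    have hnotstart := hlast L hL
    rcases hmem L hLmem with hst | hterm
    · exact absurd hst hnotstart
    · obtain ⟨⟨-, hdisc, -⟩, hT⟩ := hterm
      have hdiscs : ∀ P ∈ l, P.Discrete := by
        intro P hP
        rcases hmem P hP with h | h
        · exact h.1.2.1
        · exact h.1.2.1
      have hex : ∃ x₀, x₀ ∉ L.T := by
        by_contra hc
        push_neg at hc
        exact hT (Set.eq_univ_iff_forall.mpr hc)
      exact gluesTo_goodR hglue hdiscs L hL hex

end InQFacts


namespace PreIpomset

variable {σ : Type}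

/-- The remainder of `P` after division by a discrete prefix. -/
noncomputable def divRem (P : PreIpomset σ) (Dead' Fresh' : Set P.carrier) : PreIpomset σ where
  carrier := {p : P.carrier // p ∉ Dead'}
  fin := by haveI := P.fin; exact inferInstance
  lt := fun a b => P.lt a.val b.val
  evord := fun a b => P.evord a.val b.val
  S := {p | p.val ∈ P.S ∨ p.val ∈ Fresh'}
  T := {p | p.val ∈ P.T}
  lab := fun p => P.lab p.val

lemma division {D R₂ R P Q : PreIpomset σ}
    (hD : D.Discrete) (hQ : Q.Discrete) (y₀ : {y : Q.carrier // y ∉ Q.S})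
    (h1 : GlueRel D R₂ R) (h2 : GlueRel P Q R)
    (hlne : ∀ a b, P.lt a b → ¬ P.evord a b ∧ ¬ P.evord b a)
    (hPexT : ∃ p, p ∉ P.T)
    (hGoodR : ∀ q, ∃ p, p ∉ P.T ∧ ¬ P.lt p q)
    (hmin₂ : ∀ w ∈ R₂.S, ∀ w', ¬ R₂.lt w' w) :
    ∃ P₂ : PreIpomset σ, GlueRel D P₂ P ∧ GlueRel P₂ Q R₂ ∧
      (∀ a b, P₂.lt a b → ¬ P₂.evord a b ∧ ¬ P₂.evord b a) ∧
      ((P₂.S = Set.univ ∧ P₂.T = Set.univ ∧ ∀ a b, ¬ P₂.lt a b) ∨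
        ∀ q, ∃ p, p ∉ P₂.T ∧ ¬ P₂.lt p q) := by
  classical
  obtain ⟨m₁, e₁, c1, c2, c3, c4, c5⟩ := h1
  obtain ⟨m₂, e₂, b1, b2, b3, b4, b5⟩ := h2
  -- nothing of R lies below a D-position
  have FactNB : ∀ (x : D.carrier) (r : R.carrier), ¬ R.lt r (e₁ (Sum.inl x)) := by
    intro x r hlt
    have hlt' : (glue D R₂ m₁).lt (e₁.symm r) (e₁.symm (e₁ (Sum.inl x))) := by
      rw [c1, e₁.apply_symm_apply, e₁.apply_symm_apply]
      exact hlt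
    erw [e₁.symm_apply_apply] at hlt'
    erw [glue_lt_iff] at hlt'
    rcases hlt' with ⟨a, b, ha, hb, hab⟩ | ⟨w, w', hw, hw', hww⟩ | ⟨-, ⟨w, hw, hwS⟩⟩
    · exact hD _ _ hab
    · by_cases hx : x ∈ D.T
      · rw [glueQOf_inl_pos m₁ hx] at hw'
        cases Option.some_inj.mp hw'
        exact hmin₂ _ (m₁.g ⟨x, hx⟩).2 _ hww
      · rw [glueQOf_inl_neg m₁ hx] at hw'
        exact absurd hw' (by simp)
    · by_cases hx : x ∈ D.T
      · rw [glueQOf_inl_pos m₁ hx] at hw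
        cases Option.some_inj.mp hw
        exact hwS (m₁.g ⟨x, hx⟩).2
      · rw [glueQOf_inl_neg m₁ hx] at hw
        exact absurd hw (by simp)
  -- every D-position is a P-event
  have FactInl : ∀ x : D.carrier, ∃ p : P.carrier, e₂ (Sum.inl p) = e₁ (Sum.inl x) := by
    intro x
    rcases hu : e₂.symm (e₁ (Sum.inl x)) with p | yv
    · exact ⟨p, by rw [← hu, e₂.apply_symm_apply]⟩
    · exfalso
      obtain ⟨p₀, hp₀⟩ := hPexT
      have hlt : (glue P Q m₂).lt (Sum.inl p₀) (Sum.inr yv) := by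
        erw [glue_lt_iff]
        exact Or.inr (Or.inr ⟨⟨p₀, rfl, hp₀⟩, ⟨yv.val, glueQOf_inr m₂ yv, yv.2⟩⟩)
      erw [b1] at hlt
      have : e₂ (Sum.inr yv) = e₁ (Sum.inl x) := by rw [← hu, e₂.apply_symm_apply]
      rw [this] at hlt
      exact FactNB x _ hlt
  set π : D.carrier → P.carrier := fun x => (FactInl x).choose with hπdef
  have hπ : ∀ x, e₂ (Sum.inl (π x)) = e₁ (Sum.inl x) := fun x => (FactInl x).choose_spec
  have πinj : Function.Injective π := by
    intro x x' h
    have := hπ x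
    rw [h, hπ x'] at this
    exact (Sum.inl_injective (e₁.injective this)).symm
  have hπS : ∀ x, π x ∈ P.S ↔ x ∈ D.S := by
    intro x
    erw [← glue_S_inl m₂ (π x), b3, hπ x, ← c3, glue_S_inl m₁]
  have hNBπ : ∀ (x) (q : P.carrier), ¬ P.lt q (π x) := by
    intro x q hlt
    have : (glue P Q m₂).lt (Sum.inl q) (Sum.inl (π x)) := by
      erw [glue_lt_iff]; exact Or.inl ⟨q, π x, rfl, rfl, hlt⟩
    erw [b1, hπ x] at this
    exact FactNB x _ this
  have hπevord : ∀ x x', D.evord x x' ↔ P.evord (π x) (π x') := by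
    intro x x'
    erw [← glue_evord_inl_inl m₂ (π x) (π x'), b2, hπ x, hπ x', ← c2, glue_evord_inl_inl m₁]
  have hπlab : ∀ x, P.lab (π x) = D.lab x := by
    intro x
    have h9 : R.lab (e₂ (Sum.inl (π x))) = P.lab (π x) := b5 (Sum.inl (π x))
    have h10 : R.lab (e₁ (Sum.inl x)) = D.lab x := c5 (Sum.inl x)
    rw [hπ x] at h9
    rw [← h9, h10]
  set Dead' : Set P.carrier := {p | ∃ x, x ∉ D.T ∧ π x = p} with hDead'
  set Fresh' : Set P.carrier := {p | ∃ x, x ∉ D.S ∧ x ∈ D.T ∧ π x = p} with hFresh'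
  -- dead events behave as terminated-at-once events
  have hDeadLt : ∀ (x), x ∉ D.T → ∀ q : P.carrier, (P.lt (π x) q ↔ q ∉ Set.range π) := by
    intro x hx q
    constructor
    · intro hlt hq
      obtain ⟨x', rfl⟩ := hq
      have : (glue P Q m₂).lt (Sum.inl (π x)) (Sum.inl (π x')) := by
        erw [glue_lt_iff]; exact Or.inl ⟨_, _, rfl, rfl, hlt⟩
      erw [b1, hπ x, hπ x'] at this
      have h9 : (glue D R₂ m₁).lt (Sum.inl x) (Sum.inl x') := by
        erw [c1]; exact this
      erw [glue_lt_iff] at h9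
      rcases h9 with ⟨a, b, ha, hb, hab⟩ | ⟨w, w', hw, hw', hww⟩ | ⟨-, ⟨w, hw, hwS⟩⟩
      · exact hD _ _ hab
      · rw [glueQOf_inl_neg m₁ hx] at hw
        exact absurd hw (by simp)
      · by_cases hx' : x' ∈ D.T
        · rw [glueQOf_inl_pos m₁ hx'] at hw
          cases Option.some_inj.mp hw
          exact hwS (m₁.g ⟨x', hx'⟩).2
        · rw [glueQOf_inl_neg m₁ hx'] at hw
          exact absurd hw (by simp)
    · intro hq
      rcases hv : e₁.symm (e₂ (Sum.inl q)) with x'' | yv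
      · exfalso
        apply hq
        refine ⟨x'', ?_⟩
        apply Sum.inl_injective (e₂.injective _)
        rw [hπ x'']
        rw [← hv, e₁.apply_symm_apply]
      · have h9 : (glue D R₂ m₁).lt (Sum.inl x) (Sum.inr yv) := by
          erw [glue_lt_iff]
          exact Or.inr (Or.inr ⟨⟨x, rfl, hx⟩, ⟨yv.val, glueQOf_inr m₁ yv, yv.2⟩⟩)
        erw [c1] at h9
        have h10 : e₁ (Sum.inr yv) = e₂ (Sum.inl q) := by rw [← hv, e₁.apply_symm_apply]
        erw [h10, ← hπ x, ← b1] at h9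
        exact (glue_lt_inl_inl m₂ hQ _ _).mp h9
  have hDeadT : ∀ (x), x ∉ D.T → π x ∉ P.T := by
    intro x hx hmem
    rcases hv : e₁.symm (e₂ (Sum.inr y₀)) with x'' | yv
    · have : e₁ (Sum.inl x'') = e₂ (Sum.inr y₀) := by rw [← hv, e₁.apply_symm_apply]
      rw [← hπ x''] at this
      exact absurd (e₂.injective this) (by simp)
    · have h9 : (glue D R₂ m₁).lt (Sum.inl x) (Sum.inr yv) := by
        erw [glue_lt_iff]
        exact Or.inr (Or.inr ⟨⟨x, rfl, hx⟩, ⟨yv.val, glueQOf_inr m₁ yv, yv.2⟩⟩)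
      erw [c1] at h9
      have h10 : e₁ (Sum.inr yv) = e₂ (Sum.inr y₀) := by rw [← hv, e₁.apply_symm_apply]
      erw [h10, ← hπ x, ← b1] at h9
      exact (glue_lt_inl_inr m₂ hQ _ _).mp h9 hmem
  have hAliveRange : ∀ p ∈ P.S, ∃ x, x ∈ D.S ∧ π x = p := by
    intro p hp
    have h9 : e₂.symm (e₂ (Sum.inl p)) ∈ (glue P Q m₂).S := by
      erw [e₂.symm_apply_apply, glue_S_iff]
      exact ⟨p, rfl, hp⟩
    have h10 : e₂ (Sum.inl p) ∈ R.S := by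
      rw [← e₂.apply_symm_apply (e₂ (Sum.inl p))] at h9 ⊢
      erw [e₂.symm_apply_apply] at h9 ⊢
      exact (b3 _).mp ((glue_S_iff m₂ _).mpr ⟨p, rfl, hp⟩)
    have h11 : e₁.symm (e₂ (Sum.inl p)) ∈ (glue D R₂ m₁).S := by
      rw [c3, e₁.apply_symm_apply]
      exact h10
    rw [glue_S_iff] at h11
    obtain ⟨x, hx1, hx2⟩ := h11
    refine ⟨x, hx2, ?_⟩
    apply Sum.inl_injective (e₂.injective _)
    rw [hπ x, ← hx1, e₁.apply_symm_apply]
  have hDeadNotFresh : ∀ p ∈ Dead', p ∉ P.T := by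
    rintro p ⟨x, hx, rfl⟩
    exact hDeadT x hx
  -- the remainder
  set P₂ : PreIpomset σ := divRem P Dead' Fresh' with hP₂
  have hP₂T : ∀ w : P₂.carrier, w ∈ P₂.T ↔ w.val ∈ P.T := fun _ => Iff.rfl
  have hP₂S : ∀ w : P₂.carrier, w ∈ P₂.S ↔ (w.val ∈ P.S ∨ w.val ∈ Fresh') := fun _ => Iff.rfl
  have hAliveChar : ∀ w : P₂.carrier,
      (w.val ∈ P.S ∨ w.val ∈ Fresh') ↔ ∃ x, x ∈ D.T ∧ π x = w.val := by
    intro w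
    constructor
    · rintro (hp | ⟨x, hxS, hxT, heq⟩)
      · obtain ⟨x, hxS, heq⟩ := hAliveRange _ hp
        refine ⟨x, ?_, heq⟩
        by_contra hxT
        exact w.2 ⟨x, hxT, heq⟩
      · exact ⟨x, hxT, heq⟩
    · rintro ⟨x, hxT, heq⟩
      by_cases hxS : x ∈ D.S
      · exact Or.inl (heq ▸ (hπS x).mpr hxS)
      · exact Or.inr ⟨x, hxS, hxT, heq⟩
  have hwNotRange : ∀ w : {w : P₂.carrier // w ∉ P₂.S}, w.val.val ∉ Set.range π := by
    rintro w ⟨x, hx⟩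
    by_cases hxT : x ∈ D.T
    · exact w.2 ((hAliveChar w.val).mpr ⟨x, hxT, hx⟩)
    · exact w.val.2 ⟨x, hxT, hx⟩
  -- the matching of D with the remainder
  have hmemT4 : ∀ x : {x : D.carrier // x ∈ D.T}, π x.val ∉ Dead' := by
    rintro x ⟨x', hx', heq⟩
    have h9 := πinj heq
    exact hx' (h9 ▸ x.2)
  set t4 : {x : D.carrier // x ∈ D.T} → {w : P₂.carrier // w ∈ P₂.S} :=
    fun x => ⟨⟨π x.val, hmemT4 x⟩,
      (hP₂S _).mpr ((hAliveChar ⟨π x.val, hmemT4 x⟩).mpr ⟨x.val, x.2, rfl⟩)⟩ with ht4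
  have t4bij : Function.Bijective t4 := by
    constructor
    · intro x x' h
      have h9 := congrArg (fun z => (Subtype.val (Subtype.val z) : P.carrier)) h
      exact Subtype.ext (πinj h9)
    · rintro ⟨w, hw⟩
      obtain ⟨x, hxT, heq⟩ := (hAliveChar w).mp ((hP₂S w).mp hw)
      exact ⟨⟨x, hxT⟩, Subtype.ext (Subtype.ext heq)⟩
  set g4 := Equiv.ofBijective t4 t4bij with hg4
  have ev4 : ∀ x y : {x : D.carrier // x ∈ D.T},
      D.evord x.val y.val ↔ P₂.evord (g4 x).val (g4 y).val := by
    intro x y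
    show D.evord x.val y.val ↔ P.evord (π x.val) (π y.val)
    exact hπevord _ _
  have lab4 : ∀ x : {x : D.carrier // x ∈ D.T}, P₂.lab (g4 x).val = D.lab x.val := by
    intro x
    show P.lab (π x.val) = D.lab x.val
    exact hπlab _
  set m₄ : Matching D P₂ := ⟨g4, ev4, lab4⟩ with hm₄
  have hm₄val : ∀ (x) (hx : x ∈ D.T), (m₄.g ⟨x, hx⟩).val.val = π x := fun _ _ => rfl
  -- the iso (glue D P₂ m₄) ≃ P
  have Φbij : Function.Bijective
      (Sum.elim π (fun w : {w : P₂.carrier // w ∉ P₂.S} => w.val.val)) := by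
    constructor
    · rintro (x | w) (x' | w') h
      · exact congrArg Sum.inl (πinj h)
      · exact absurd ⟨x, h⟩ (hwNotRange w')
      · exact absurd ⟨x', h.symm⟩ (hwNotRange w)
      · exact congrArg Sum.inr (Subtype.ext (Subtype.ext h))
    · intro p
      by_cases hp : p ∈ Set.range π
      · obtain ⟨x, hx⟩ := hp
        exact ⟨Sum.inl x, hx⟩
      · have hd : p ∉ Dead' := by
          rintro ⟨x, hx, heq⟩
          exact hp ⟨x, heq⟩
        have hs : (⟨p, hd⟩ : P₂.carrier) ∉ P₂.S := by
          intro hmem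
          obtain ⟨x, hxT, heq⟩ := (hAliveChar ⟨p, hd⟩).mp ((hP₂S _).mp hmem)
          exact hp ⟨x, heq⟩
        exact ⟨Sum.inr ⟨⟨p, hd⟩, hs⟩, rfl⟩
  have hGlue1 : GlueRel D P₂ P := by
    refine ⟨m₄, Equiv.ofBijective _ Φbij, ?_, ?_, ?_, ?_, ?_⟩
    · intro u v
      rcases u with x | w <;> rcases v with x' | w'
      · constructor
        · intro h
          obtain ⟨hx, hx', hlt⟩ := (glue_lt_left_inl_inl m₄ hD x x').mp h
          exact absurd hlt (hNBπ x' (π x))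
        · intro h
          exact absurd h (hNBπ x' (π x))
      · constructor
        · intro h
          rcases (glue_lt_left_inl_inr m₄ hD x w').mp h with ⟨hx, hlt⟩ | hx
          · exact hlt
          · exact (hDeadLt x hx _).mpr (hwNotRange w')
        · intro h
          apply (glue_lt_left_inl_inr m₄ hD x w').mpr
          by_cases hx : x ∈ D.T
          · exact Or.inl ⟨hx, h⟩
          · exact Or.inr hx
      · constructor
        · intro h
          obtain ⟨hx', hlt⟩ := (glue_lt_left_inr_inl m₄ x' w).mp h
          exact absurd hlt (hNBπ x' w.val.val)
        · intro h
          exact absurd h (hNBπ x' w.val.val)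
      · rw [glue_lt_left_inr_inr m₄ w w']
        exact Iff.rfl
    · intro u v
      rcases u with x | w <;> rcases v with x' | w'
      · rw [glue_evord_inl_inl m₄]
        exact hπevord x x'
      · constructor
        · intro h
          obtain ⟨hx, h9⟩ := (glue_evord_inl_inr m₄ x w').mp h
          exact h9
        · intro h
          by_cases hx : x ∈ D.T
          · exact (glue_evord_inl_inr m₄ x w').mpr ⟨hx, h⟩
          · exact absurd h (hlne _ _ ((hDeadLt x hx _).mpr (hwNotRange w'))).1
      · constructor
        · intro h
          obtain ⟨hx', h9⟩ := (glue_evord_inr_inl m₄ x' w).mp h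
          exact h9
        · intro h
          by_cases hx' : x' ∈ D.T
          · exact (glue_evord_inr_inl m₄ x' w).mpr ⟨hx', h⟩
          · exact absurd h (hlne _ _ ((hDeadLt x' hx' _).mpr (hwNotRange w))).2
      · rw [glue_evord_inr_inr m₄]
        exact Iff.rfl
    · intro u
      rcases u with x | w
      · erw [glue_S_inl m₄]
        exact (hπS x).symm
      · refine iff_of_false (glue_S_not_inr m₄ w) ?_
        intro h
        exact w.2 ((hP₂S w.val).mpr (Or.inl h))
    · intro u
      rcases u with x | w
      · constructor
        · intro h
          obtain ⟨hx, h9⟩ := (glue_T_inl m₄ x).mp h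
          exact h9
        · intro h
          by_cases hx : x ∈ D.T
          · exact (glue_T_inl m₄ x).mpr ⟨hx, h⟩
          · exact absurd h (hDeadT x hx)
      · erw [glue_T_inr m₄]
        exact Iff.rfl
    · intro u
      rcases u with x | w
      · exact hπlab x
      · rfl
  -- the matching of the remainder with Q
  have hmemT5 : ∀ w : {w : P₂.carrier // w ∈ P₂.T}, w.val.val ∈ P.T := fun w => w.2
  set t5 : {w : P₂.carrier // w ∈ P₂.T} → {q : Q.carrier // q ∈ Q.S} :=
    fun w => m₂.g ⟨w.val.val, hmemT5 w⟩ with ht5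
  have t5bij : Function.Bijective t5 := by
    constructor
    · intro w w' h
      have h9 := congrArg Subtype.val (m₂.g.injective h)
      exact Subtype.ext (Subtype.ext h9)
    · intro q
      have hp : (m₂.g.symm q).val ∈ P.T := (m₂.g.symm q).2
      have hd : (m₂.g.symm q).val ∉ Dead' := fun hdm => hDeadNotFresh _ hdm hp
      refine ⟨⟨⟨(m₂.g.symm q).val, hd⟩, hp⟩, ?_⟩
      show m₂.g ⟨(m₂.g.symm q).val, _⟩ = q
      have h9 : (⟨(m₂.g.symm q).val, hp⟩ : {p // p ∈ P.T}) = m₂.g.symm q :=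
        Subtype.ext rfl
      rw [h9, m₂.g.apply_symm_apply]
  set g5 := Equiv.ofBijective t5 t5bij with hg5
  have ev5 : ∀ w c : {w : P₂.carrier // w ∈ P₂.T},
      P₂.evord w.val c.val ↔ Q.evord (g5 w).val (g5 c).val := by
    intro w c
    exact m₂.evord_iff ⟨w.val.val, hmemT5 w⟩ ⟨c.val.val, hmemT5 c⟩
  have lab5 : ∀ w : {w : P₂.carrier // w ∈ P₂.T}, Q.lab (g5 w).val = P₂.lab w.val := by
    intro w
    exact m₂.lab_eq ⟨w.val.val, hmemT5 w⟩
  set m₅ : Matching P₂ Q := ⟨g5, ev5, lab5⟩ with hm₅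
  -- positions of the remainder events inside R₂
  have hPosInr : ∀ y : {y : Q.carrier // y ∉ Q.S},
      ∃ yv, e₁.symm (e₂ (Sum.inr y)) = Sum.inr yv := by
    intro y
    rcases hv : e₁.symm (e₂ (Sum.inr y)) with x | yv
    · exfalso
      have h9 : e₁ (Sum.inl x) = e₂ (Sum.inr y) := by rw [← hv, e₁.apply_symm_apply]
      rw [← hπ x] at h9
      exact absurd (e₂.injective h9) (by simp)
    · exact ⟨yv, rfl⟩
  have hInAll : ∀ u : (glue P₂ Q m₅).carrier,
      ∃ r₂, glueQOf D R₂ m₁ (e₁.symm (e₂ (Sum.map Subtype.val id u))) = some r₂ := by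
    rintro (w | y)
    · show ∃ r₂, glueQOf D R₂ m₁ (e₁.symm (e₂ (Sum.inl w.val))) = some r₂
      rcases hv : e₁.symm (e₂ (Sum.inl w.val)) with x | yv
      · have heq : π x = w.val := by
          apply Sum.inl_injective (e₂.injective _)
          rw [hπ x, ← hv, e₁.apply_symm_apply]
        have hxT : x ∈ D.T := by
          by_contra hxT
          exact w.2 ⟨x, hxT, heq⟩
        exact ⟨_, glueQOf_inl_pos m₁ hxT⟩
      · exact ⟨yv.val, glueQOf_inr m₁ yv⟩
    · show ∃ r₂, glueQOf D R₂ m₁ (e₁.symm (e₂ (Sum.inr y))) = some r₂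
      obtain ⟨yv, hyv⟩ := hPosInr y
      rw [hyv]
      exact ⟨yv.val, glueQOf_inr m₁ yv⟩
  have hΦ₅ : ∀ u, glueQOf D R₂ m₁ (e₁.symm (e₂ (Sum.map Subtype.val id u))) =
      some ((hInAll u).choose) := fun u => (hInAll u).choose_spec
  -- transfer lemmas through the gluing D * R₂
  have hLtT : ∀ (a b : (glue D R₂ m₁).carrier) (wa wb : R₂.carrier),
      glueQOf D R₂ m₁ a = some wa → glueQOf D R₂ m₁ b = some wb →
      (R₂.lt wa wb ↔ (glue D R₂ m₁).lt a b) := by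
    intro a b wa wb ha hb
    constructor
    · intro h
      rw [glue_lt_iff]
      exact Or.inr (Or.inl ⟨wa, wb, ha, hb, h⟩)
    · intro h
      rw [glue_lt_iff] at h
      rcases h with ⟨p, p', hp, hp', h⟩ | ⟨w1, w1', h1', h2', h⟩ | ⟨⟨p, hp, hpT⟩, -⟩
      · exact absurd h (hD _ _)
      · rw [ha] at h1'
        rw [hb] at h2'
        cases Option.some_inj.mp h1'
        cases Option.some_inj.mp h2'
        exact h
      · rw [hp, glueQOf_inl_neg m₁ hpT] at ha
        exact absurd ha (by simp)
  have hEvT : ∀ (a b : (glue D R₂ m₁).carrier) (wa wb : R₂.carrier),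
      glueQOf D R₂ m₁ a = some wa → glueQOf D R₂ m₁ b = some wb →
      (R₂.evord wa wb ↔ (glue D R₂ m₁).evord a b) := by
    intro a b wa wb ha hb
    constructor
    · intro h
      rw [glue_evord_iff]
      exact Or.inr ⟨wa, wb, ha, hb, h⟩
    · intro h
      rw [glue_evord_iff] at h
      rcases h with ⟨p, p', hp, hp', h⟩ | ⟨w1, w1', h1', h2', h⟩
      · rw [hp] at ha
        rw [hp'] at hb
        exact (glueQOf_inl_evord m₁ ha hb).mp h
      · rw [ha] at h1'
        rw [hb] at h2'
        cases Option.some_inj.mp h1'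
        cases Option.some_inj.mp h2'
        exact h
  have hTT : ∀ (a : (glue D R₂ m₁).carrier) (wa : R₂.carrier),
      glueQOf D R₂ m₁ a = some wa → (wa ∈ R₂.T ↔ a ∈ (glue D R₂ m₁).T) := by
    intro a wa ha
    rw [glue_T_iff]
    constructor
    · intro h
      exact ⟨wa, ha, h⟩
    · rintro ⟨w', h1', h2'⟩
      rw [ha] at h1'
      cases Option.some_inj.mp h1'
      exact h2'
  have hST : ∀ (a : (glue D R₂ m₁).carrier) (wa : R₂.carrier),
      glueQOf D R₂ m₁ a = some wa → (wa ∈ R₂.S ↔ ∃ x, a = Sum.inl x) := by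
    intro a wa ha
    cases a with
    | inl x => exact iff_of_true (glueQOf_inl_mem_T m₁ ha).2 ⟨x, rfl⟩
    | inr yv =>
      rw [glueQOf_inr] at ha
      cases Option.some_inj.mp ha
      refine iff_of_false yv.2 ?_
      rintro ⟨x, hx⟩
      exact absurd hx (by simp)
  have hLabT : ∀ (a : (glue D R₂ m₁).carrier) (wa : R₂.carrier),
      glueQOf D R₂ m₁ a = some wa → R₂.lab wa = (glue D R₂ m₁).lab a := by
    intro a wa ha
    cases a with
    | inl x => exact glueQOf_inl_lab m₁ ha
    | inr yv =>
      rw [glueQOf_inr] at ha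
      cases Option.some_inj.mp ha
      rfl
  have Φ₅bij : Function.Bijective (fun u => (hInAll u).choose) := by
    constructor
    · intro u v h
      have h1' := hΦ₅ u
      simp only at h
      rw [h] at h1'
      have h2' := eq_secQ_of_glueQOf m₁ h1'
      have h3' := eq_secQ_of_glueQOf m₁ (hΦ₅ v)
      rw [← h3'] at h2'
      have h4' : Sum.map Subtype.val id u = Sum.map Subtype.val id v :=
        e₂.injective (e₁.symm.injective h2')
      rcases u with w | y <;> rcases v with w' | y' <;>
        skip
      · exact congrArg Sum.inl (Subtype.ext (Sum.inl_injective h4'))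
      · exact absurd h4' Sum.inl_ne_inr
      · exact absurd h4' Sum.inr_ne_inl
      · exact congrArg Sum.inr (Sum.inr_injective h4')
    · intro r₂
      have ha : glueQOf D R₂ m₁ (secQ m₁ r₂) = some r₂ := glueQOf_secQ m₁ r₂
      rcases hv : e₂.symm (e₁ (secQ m₁ r₂)) with p | yq
      · have hpd : p ∉ Dead' := by
          rintro ⟨x, hx, heq⟩
          have h9 : e₁ (Sum.inl x) = e₁ (secQ m₁ r₂) := by
            rw [← hπ x, heq, ← hv, e₂.apply_symm_apply]
          have h10 : Sum.inl x = secQ m₁ r₂ := e₁.injective h9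
          rw [← h10, glueQOf_inl_neg m₁ hx] at ha
          exact absurd ha (by simp)
        refine ⟨Sum.inl ⟨p, hpd⟩, ?_⟩
        have h11 := hΦ₅ (Sum.inl ⟨p, hpd⟩)
        have h12 : e₁.symm (e₂ (Sum.map Subtype.val id
            (Sum.inl (⟨p, hpd⟩ : P₂.carrier) : (glue P₂ Q m₅).carrier))) = secQ m₁ r₂ := by
          show e₁.symm (e₂ (Sum.inl p)) = secQ m₁ r₂
          erw [← hv, e₂.apply_symm_apply, e₁.symm_apply_apply]
        rw [← h12] at ha
        exact (Option.some_inj.mp (ha.symm.trans h11)).symm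
      · refine ⟨Sum.inr yq, ?_⟩
        have h11 := hΦ₅ (Sum.inr yq)
        have h12 : e₁.symm (e₂ (Sum.map Subtype.val id
            (Sum.inr yq : (glue P₂ Q m₅).carrier))) = secQ m₁ r₂ := by
          show e₁.symm (e₂ (Sum.inr yq)) = secQ m₁ r₂
          erw [← hv, e₂.apply_symm_apply, e₁.symm_apply_apply]
        rw [← h12] at ha
        exact (Option.some_inj.mp (ha.symm.trans h11)).symm
  -- chained transfer facts
  have hRlt : ∀ u v : (glue P₂ Q m₅).carrier,
      R₂.lt ((hInAll u).choose) ((hInAll v).choose) ↔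
        (glue P Q m₂).lt (Sum.map Subtype.val id u) (Sum.map Subtype.val id v) := by
    intro u v
    erw [hLtT _ _ _ _ (hΦ₅ u) (hΦ₅ v), c1, e₁.apply_symm_apply, e₁.apply_symm_apply, ← b1]
  have hRev : ∀ u v : (glue P₂ Q m₅).carrier,
      R₂.evord ((hInAll u).choose) ((hInAll v).choose) ↔
        (glue P Q m₂).evord (Sum.map Subtype.val id u) (Sum.map Subtype.val id v) := by
    intro u v
    erw [hEvT _ _ _ _ (hΦ₅ u) (hΦ₅ v), c2, e₁.apply_symm_apply, e₁.apply_symm_apply, ← b2]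
  have hRT : ∀ u : (glue P₂ Q m₅).carrier,
      ((hInAll u).choose ∈ R₂.T ↔ (Sum.map Subtype.val id u) ∈ (glue P Q m₂).T) := by
    intro u
    erw [hTT _ _ (hΦ₅ u), c4, e₁.apply_symm_apply, ← b4]; exact Iff.rfl
  have hRlab : ∀ u : (glue P₂ Q m₅).carrier,
      R₂.lab ((hInAll u).choose) = (glue P Q m₂).lab (Sum.map Subtype.val id u) := by
    intro u
    erw [hLabT _ _ (hΦ₅ u), ← c5, e₁.apply_symm_apply, b5]
  have hGlue2 : GlueRel P₂ Q R₂ := by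
    refine ⟨m₅, Equiv.ofBijective _ Φ₅bij, ?_, ?_, ?_, ?_, ?_⟩
    · intro u v
      show _ ↔ R₂.lt ((hInAll u).choose) ((hInAll v).choose)
      rw [hRlt u v]
      rcases u with w | y <;> rcases v with w' | y' <;>
        skip
      · erw [glue_lt_inl_inl m₅ hQ, glue_lt_inl_inl m₂ hQ]
        exact Iff.rfl
      · erw [glue_lt_inl_inr m₅ hQ, glue_lt_inl_inr m₂ hQ]
        exact Iff.rfl
      · exact iff_of_false (glue_lt_not_inr m₅ hQ y _) (glue_lt_not_inr m₂ hQ y _)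
      · exact iff_of_false (glue_lt_not_inr m₅ hQ y _) (glue_lt_not_inr m₂ hQ y _)
    · intro u v
      show _ ↔ R₂.evord ((hInAll u).choose) ((hInAll v).choose)
      rw [hRev u v]
      rcases u with w | y <;> rcases v with w' | y' <;>
        skip
      · erw [glue_evord_inl_inl m₅, glue_evord_inl_inl m₂]
        exact Iff.rfl
      · erw [glue_evord_inl_inr m₅, glue_evord_inl_inr m₂]
        constructor
        · rintro ⟨hp, h⟩
          exact ⟨hp, h⟩
        · rintro ⟨hp, h⟩
          exact ⟨hp, h⟩
      · erw [glue_evord_inr_inl m₅, glue_evord_inr_inl m₂]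
        constructor
        · rintro ⟨hp, h⟩
          exact ⟨hp, h⟩
        · rintro ⟨hp, h⟩
          exact ⟨hp, h⟩
      · erw [glue_evord_inr_inr m₅, glue_evord_inr_inr m₂]; exact Iff.rfl
    · intro u
      show _ ↔ (hInAll u).choose ∈ R₂.S
      rw [hST _ _ (hΦ₅ u)]
      rcases u with w | y <;>
        skip
      · erw [glue_S_inl m₅]
        constructor
        · intro h
          obtain ⟨x, hxT, heq⟩ := (hAliveChar w).mp ((hP₂S w).mp h)
          refine ⟨x, ?_⟩
          show e₁.symm (e₂ (Sum.inl w.val)) = Sum.inl x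
          erw [← heq, hπ x, e₁.symm_apply_apply]
        · rintro ⟨x, hx⟩
          have h9 : e₂ (Sum.inl w.val) = e₁ (Sum.inl x) := by
            erw [← e₁.apply_symm_apply (e₂ (Sum.inl w.val)), hx]
          rw [← hπ x] at h9
          have heq : π x = w.val := (Sum.inl_injective (e₂.injective h9)).symm
          have hxT : x ∈ D.T := by
            by_contra hxT
            exact w.2 ⟨x, hxT, heq⟩
          exact (hP₂S w).mpr ((hAliveChar w).mpr ⟨x, hxT, heq⟩)
      · refine iff_of_false (glue_S_not_inr m₅ y) ?_
        rintro ⟨x, hx⟩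
        obtain ⟨yv, hyv⟩ := hPosInr y
        erw [hyv] at hx
        exact absurd hx (by simp)
    · intro u
      show _ ↔ (hInAll u).choose ∈ R₂.T
      rw [hRT u]
      rcases u with w | y <;>
        skip
      · erw [glue_T_inl m₅]
      · erw [glue_T_inr m₅]
    · intro u
      show R₂.lab ((hInAll u).choose) = _
      rw [hRlab u]
      rcases u with w | y <;> rfl
  refine ⟨P₂, hGlue1, hGlue2, ?_, ?_⟩
  · intro a b h
    exact hlne a.val b.val h
  · by_cases hid : P₂.S = Set.univ ∧ P₂.T = Set.univ ∧ ∀ a b : P₂.carrier, ¬ P₂.lt a b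
    · exact Or.inl hid
    · right
      intro q₂
      obtain ⟨p, hpT, hplt⟩ := hGoodR q₂.val
      by_cases hpd : p ∈ Dead'
      · have hqr : q₂.val ∈ Set.range π := by
          by_contra hqr
          obtain ⟨x, hx, heq⟩ := hpd
          exact hplt (heq ▸ (hDeadLt x hx q₂.val).mpr hqr)
        by_cases hex2 : ∃ p₂ : P₂.carrier, p₂ ∉ P₂.T
        · obtain ⟨p₂, hp₂⟩ := hex2
          refine ⟨p₂, hp₂, ?_⟩
          obtain ⟨x, hx⟩ := hqr
          intro hl
          exact hNBπ x p₂.val (by rw [hx]; exact hl)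
        · exfalso
          apply hid
          push_neg at hex2
          have hrange : ∀ w : P₂.carrier, ∃ x, x ∈ D.T ∧ π x = w.val := by
            intro w
            obtain ⟨p', hp'T, hp'lt⟩ := hGoodR w.val
            have hp'd : p' ∈ Dead' := by
              by_contra hp'd
              exact hp'T (hex2 ⟨p', hp'd⟩)
            obtain ⟨x', hx', heq'⟩ := hp'd
            have hwr : w.val ∈ Set.range π := by
              by_contra hwr
              exact hp'lt (heq' ▸ (hDeadLt x' hx' w.val).mpr hwr)
            obtain ⟨x, hx⟩ := hwr
            refine ⟨x, ?_, hx⟩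
            by_contra hxT
            exact w.2 ⟨x, hxT, hx⟩
          refine ⟨?_, ?_, ?_⟩
          · ext w
            simp only [Set.mem_univ, iff_true]
            exact (hP₂S w).mpr ((hAliveChar w).mpr (hrange w))
          · ext w
            simp only [Set.mem_univ, iff_true]
            exact hex2 w
          · intro a b h
            obtain ⟨x, hxT, heq⟩ := hrange b
            exact hNBπ x a.val (by rw [heq]; exact h)
      · exact ⟨⟨p, hpd⟩, hpT, hplt⟩

end PreIpomset


section MainSplit

variable {σ : Type} {X : PrePHDA σ}

lemma identity_split (hX : X.IsPHDA) {s x : X.cell} {α : X.Path s x}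
    {R P Q : PreIpomset σ} (hrec : X.Rec α R)
    (hid : P.S = Set.univ ∧ P.T = Set.univ ∧ ∀ a b, ¬ P.lt a b)
    (hg : GlueRel P Q R) : Iso (X.ev s).idOf P := by
  classical
  obtain ⟨e, einj, eS, eSurj, eev, elb⟩ := rec_src hX hrec
  obtain ⟨m₂, e₂, b1, b2, b3, b4, b5⟩ := hg
  have hex : ∀ a, ∃ p, e₂ (Sum.inl p) = e a := by
    intro a
    have h9 : e₂.symm (e a) ∈ (glue P Q m₂).S := by
      rw [b3, e₂.apply_symm_apply]
      exact eS a
    rw [glue_S_iff] at h9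
    obtain ⟨p, hp, -⟩ := h9
    exact ⟨p, by rw [← hp, e₂.apply_symm_apply]⟩
  have hπ' : ∀ a, e₂ (Sum.inl ((hex a).choose)) = e a := fun a => (hex a).choose_spec
  have hbij : Function.Bijective (fun a => (hex a).choose) := by
    constructor
    · intro a b h
      simp only at h
      apply einj
      rw [← hπ' a, ← hπ' b, h]
    · intro p
      have h9 : e₂ (Sum.inl p) ∈ R.S := by
        erw [← b3, glue_S_iff]
        exact ⟨p, rfl, hid.1 ▸ Set.mem_univ p⟩
      obtain ⟨a, ha⟩ := eSurj _ h9
      refine ⟨a, ?_⟩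
      exact Sum.inl_injective (e₂.injective ((hπ' a).trans ha))
  refine ⟨Equiv.ofBijective _ hbij, ?_, ?_, ?_, ?_, ?_⟩
  · intro a b
    exact iff_of_false (ev_discrete hX s a b) (hid.2.2 _ _)
  · intro a b
    show (X.ev s).evord a b ↔ P.evord ((hex a).choose) ((hex b).choose)
    rw [eev a b]
    constructor
    · intro h
      apply (glue_evord_inl_inl m₂ _ _).mp
      erw [b2, hπ' a, hπ' b]
      exact h
    · intro h
      have h9 : (glue P Q m₂).evord (Sum.inl ((hex a).choose)) (Sum.inl ((hex b).choose)) :=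
        (glue_evord_inl_inl m₂ _ _).mpr h
      erw [b2, hπ' a, hπ' b] at h9
      exact h9
  · intro a
    exact iff_of_true (Set.mem_univ a) (hid.1 ▸ Set.mem_univ _)
  · intro a
    exact iff_of_true (Set.mem_univ a) (hid.2.1 ▸ Set.mem_univ _)
  · intro a
    show P.lab ((hex a).choose) = (X.ev s).lab a
    have h9 := b5 (Sum.inl ((hex a).choose))
    rw [hπ' a] at h9
    exact h9.symm.trans (elb a)

lemma id_branch (hX : X.IsPHDA) {s x : X.cell} {α : X.Path s x} {R P Q : PreIpomset σ}
    (hrec : X.Rec α R)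
    (hid : P.S = Set.univ ∧ P.T = Set.univ ∧ ∀ a b, ¬ P.lt a b)
    (hg : GlueRel P Q R) :
    ∃ m, (∃ β : X.Path s m, X.Rec β P) ∧ ∃ γ : X.Path m x, X.Rec γ Q :=
  ⟨s, ⟨PrePHDA.Path.nil s, .nil _ _ (identity_split hX hrec hid hg)⟩,
    ⟨α, rec_iso hrec (identity_glueRel_iso hid.1 hid.2.1 hid.2.2 hg).symm⟩⟩

lemma main_split (hX : X.IsPHDA) {Q : PreIpomset σ} (hQ : Q.Discrete)
    (y₀ : {y : Q.carrier // y ∉ Q.S}) :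
    ∀ {s x : X.cell} (α : X.Path s x) (R P : PreIpomset σ), X.Rec α R → GlueRel P Q R →
      (∀ a b, P.lt a b → ¬ P.evord a b ∧ ¬ P.evord b a) →
      ((P.S = Set.univ ∧ P.T = Set.univ ∧ ∀ a b, ¬ P.lt a b) ∨
        ∀ q, ∃ p, p ∉ P.T ∧ ¬ P.lt p q) →
      ∃ m, (∃ β : X.Path s m, X.Rec β P) ∧ ∃ γ : X.Path m x, X.Rec γ Q := by
  intro s x α
  induction α with
  | nil z =>
    intro R P hrec hg hlne hinv
    exfalso
    cases hrec with
    | nil _ _ h0 =>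
      obtain ⟨hS, -, -⟩ := idOf_facts hX h0
      obtain ⟨m₂, e₂, b1, b2, b3, b4, b5⟩ := hg
      have h9 : (Sum.inr y₀ : (glue P Q m₂).carrier) ∈ (glue P Q m₂).S := by
        erw [b3]
        exact hS ▸ Set.mem_univ _
      exact glue_S_not_inr m₂ y₀ h9
  | up y A hf rest ih =>
    intro R P hrec hg hlne hinv
    by_cases hid : P.S = Set.univ ∧ P.T = Set.univ ∧ ∀ a b, ¬ P.lt a b
    · exact id_branch hX hrec hid hg
    · have hGoodR : ∀ q, ∃ p, p ∉ P.T ∧ ¬ P.lt p q := hinv.resolve_left hid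
      have hne : Nonempty P.carrier := by
        by_contra hne
        apply hid
        refine ⟨?_, ?_, fun a b _ => hne ⟨a⟩⟩ <;>
          · ext p
            exact absurd ⟨p⟩ hne
      obtain ⟨q0⟩ := hne
      obtain ⟨p0, hp0, -⟩ := hGoodR q0
      cases hrec
      rename_i h1 h2
      obtain ⟨P₂, hg1, hg2, hlne₂, hinv₂⟩ :=
        division (D := (X.ev y).starter A) (ev_discrete hX y) hQ y₀ h2 hg hlne
          ⟨p0, hp0⟩ hGoodR (rec_src_min hX h1)
      obtain ⟨m, ⟨β, hβ⟩, hγ⟩ := ih _ P₂ h1 hg2 hlne₂ hinv₂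
      exact ⟨m, ⟨PrePHDA.Path.up y A hf β, .up y A hf β hβ hg1⟩, hγ⟩
  | down y B hf rest ih =>
    intro R P hrec hg hlne hinv
    by_cases hid : P.S = Set.univ ∧ P.T = Set.univ ∧ ∀ a b, ¬ P.lt a b
    · exact id_branch hX hrec hid hg
    · have hGoodR : ∀ q, ∃ p, p ∉ P.T ∧ ¬ P.lt p q := hinv.resolve_left hid
      have hne : Nonempty P.carrier := by
        by_contra hne
        apply hid
        refine ⟨?_, ?_, fun a b _ => hne ⟨a⟩⟩ <;>
          · ext p
            exact absurd ⟨p⟩ hne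
      obtain ⟨q0⟩ := hne
      obtain ⟨p0, hp0, -⟩ := hGoodR q0
      cases hrec
      rename_i h1 h2
      obtain ⟨P₂, hg1, hg2, hlne₂, hinv₂⟩ :=
        division (D := (X.ev y).terminator B) (ev_discrete hX y) hQ y₀ h2 hg hlne
          ⟨p0, hp0⟩ hGoodR (rec_src_min hX h1)
      obtain ⟨m, ⟨β, hβ⟩, hγ⟩ := ih _ P₂ h1 hg2 hlne₂ hinv₂
      exact ⟨m, ⟨PrePHDA.Path.down y B hf β, .down y B hf β hβ hg1⟩, hγ⟩

end MainSplit


/-- For a partial HDA `X`, `K ⊆ X`, a conclist `V` with `U ⊊ V`,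
`W ⊆ V`, and `P ∈ iPoms^q` with target interface `U`:
`X(K, P*⟨U,V,W⟩) = X(X(K,P), ⟨U,V,W⟩)`. -/
theorem track_decomposition {σ : Type} [Finite σ] (X : PrePHDA σ) (hX : X.IsPHDA)
    (K : Set X.cell) (V : PreIpomset σ) (hV : V.IsConclist)
    (U' W' : Set V.carrier) (hU : U' ≠ Set.univ)
    (P : PreIpomset σ) (hP : P.IsIpomset) (hq : InQ P)
    (R : PreIpomset σ) (hR : GlueRel P (V.withIfaces U' W') R) :
    X.track K R = X.track (X.track K P) (V.withIfaces U' W') := by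
  classical
  have hQd : (V.withIfaces U' W').Discrete := hV.2.1
  have hv₀ : ∃ v, v ∉ U' := by
    by_contra hc
    push_neg at hc
    exact hU (Set.eq_univ_iff_forall.mpr hc)
  obtain ⟨v₀, hv₀'⟩ := hv₀
  have y₀ : {y : (V.withIfaces U' W').carrier // y ∉ (V.withIfaces U' W').S} := ⟨v₀, hv₀'⟩
  ext x
  constructor
  · rintro ⟨s, α, hs, hrec⟩
    obtain ⟨m, ⟨β, hβ⟩, ⟨γ, hγ⟩⟩ :=
      main_split hX hQd y₀ α R P hrec hR hP.lt_not_evord (inQ_invariant hq)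
    exact ⟨m, γ, ⟨s, β, hs, hβ⟩, hγ⟩
  · rintro ⟨m, γ, ⟨s, β, hs, hβ⟩, hγ⟩
    exact ⟨s, β.comp γ, hs, comp_rec hX hQd β γ P R hβ hγ hR⟩

end HDA
end

section
/- For every partial HDA X there exists a partial HDA X' with L(X') = L(X) such that for every initial cell x of X' and every nonempty A ⊆ ev(x), the lower face δ⁰_A(x) is undefined. -/
open scoped Classical

namespace HDA

open PreIpomset PrePHDA

/-- Projection from the unfolded cells back to the original cells. -/
def projCell {σ : Type} (X : PrePHDA σ) : (X.cell ⊕ ℕ × X.cell) → X.cell :=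
  Sum.elim id Prod.snd

/-- The unfolding of `X` at start cells: a second copy of the cells, indexed by a
natural-number "budget" of events that may still be unstarted; lower faces in the
second copy decrease the budget and are undefined when the budget is exhausted;
faces with nonempty upper part fall back into the original copy. -/
noncomputable def unfoldStart {σ : Type} (X : PrePHDA σ) : PrePHDA σ where
  cell := X.cell ⊕ ℕ × X.cell
  ev := fun c => X.ev (projCell X c)
  face := fun c =>
    match c with
    | .inl y => fun A B => (X.face y A B).map .inl
    | .inr (n, y) => fun A B =>
        if B = ∅ then
          if A.ncard ≤ n then
            (X.face y A B).map (fun x => .inr (n - A.ncard, x))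
          else none
        else (X.face y A B).map .inl
  start := Sum.inr '' ((fun x => ((0 : ℕ), x)) '' X.start)
  accept := {c | projCell X c ∈ X.accept}

namespace UnfoldStart

variable {σ : Type} (X : PrePHDA σ)

lemma face_inl (y : X.cell) (A B : Set (X.ev y).carrier) :
    (unfoldStart X).face (.inl y) A B = (X.face y A B).map .inl := rfl

lemma face_inr (n : ℕ) (y : X.cell) (A B : Set (X.ev y).carrier) :
    (unfoldStart X).face (.inr (n, y)) A B =
      if B = ∅ then
        if A.ncard ≤ n then
          (X.face y A B).map (fun x => .inr (n - A.ncard, x))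
        else none
      else (X.face y A B).map .inl := rfl

lemma ev_eq (c : (unfoldStart X).cell) :
    (unfoldStart X).ev c = X.ev (projCell X c) := rfl

/-- Faces in the unfolding project to faces in `X`. -/
lemma face_proj {c d : (unfoldStart X).cell}
    {A B : Set ((unfoldStart X).ev c).carrier}
    (h : (unfoldStart X).face c A B = some d) :
    X.face (projCell X c) A B = some (projCell X d) := by
  match c with
  | .inl y =>
      rw [face_inl X y A B] at h
      rcases Option.map_eq_some_iff.1 h with ⟨x, hx, rfl⟩
      exact hx
  | .inr (n, y) =>
      rw [face_inr X n y A B] at h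
      split_ifs at h
      · rcases Option.map_eq_some_iff.1 h with ⟨x, hx, rfl⟩
        exact hx
      · rcases Option.map_eq_some_iff.1 h with ⟨x, hx, rfl⟩
        exact hx

variable (hX : X.IsPHDA)

include hX in
lemma isPHDA : (unfoldStart X).IsPHDA := by
  obtain ⟨h1, h2, h3, h4⟩ := hX
  refine ⟨fun c => h1 (projCell X c), ?_, ?_, ?_⟩
  · rintro (y | ⟨n, y⟩)
    · erw [face_inl X y ∅ ∅, h2]; rfl
    · erw [face_inr X n y ∅ ∅, if_pos rfl, if_pos (by simp), h2]
      erw [Set.ncard_empty, Nat.sub_zero]; rfl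
  · intro c A B d h
    exact h3 (projCell X c) A B (projCell X d) (face_proj X h)
  · rintro (y | ⟨n, y⟩) A B d h g hg C D e he
    · rw [face_inl X y A B] at h
      rcases Option.map_eq_some_iff.1 h with ⟨x', hx', rfl⟩
      erw [face_inl X x' C D] at he
      rcases Option.map_eq_some_iff.1 he with ⟨w, hw, rfl⟩
      erw [face_inl X y (A ∪ g '' C) (B ∪ g '' D), h4 y A B x' hx' g hg C D w hw, Option.map_some]
    · haveI : Finite ((unfoldStart X).ev (Sum.inr (n, y))).carrier := (X.ev y).fin
      rw [face_inr X n y A B] at h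
      by_cases hB : B = ∅
      · subst hB
        erw [if_pos rfl] at h
        by_cases hcard : A.ncard ≤ n
        · erw [if_pos hcard] at h
          rcases Option.map_eq_some_iff.1 h with ⟨x', hx', rfl⟩
          erw [face_inr X (n - A.ncard) x' C D] at he
          by_cases hD : D = ∅
          · subst hD
            erw [if_pos rfl] at he
            by_cases hcard2 : C.ncard ≤ n - A.ncard
            · erw [if_pos hcard2] at he
              rcases Option.map_eq_some_iff.1 he with ⟨w, hw, rfl⟩
              have hgoal := h4 y A ∅ x' hx' g hg C ∅ w hw
              have hsub : g '' C ⊆ Aᶜ := by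
                intro a ha
                have h5 := hg.2.1 ▸ Set.image_subset_range g C ha
                simpa using h5
              have hdisj : Disjoint A (g '' C) := Set.disjoint_left.2
                fun a haA hagc => hsub hagc haA
              have hcardU : (A ∪ g '' C).ncard = A.ncard + C.ncard := by
                rw [Set.ncard_union_eq hdisj (Set.toFinite _) (Set.toFinite _),
                  Set.ncard_image_of_injective C hg.1]
              have h0 : (∅ ∪ g '' (∅ : Set _)) =
                  (∅ : Set ((unfoldStart X).ev (.inr (n, y))).carrier) := by
                simp
              erw [h0] at hgoal
              erw [face_inr X n y (A ∪ g '' C) (∅ ∪ g '' ∅), h0, if_pos rfl, if_pos (by erw [hcardU]; omega), hgoal]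
              erw [hcardU, Nat.sub_add_eq]
              rfl
            · erw [if_neg hcard2] at he
              exact absurd he (by simp)
          · erw [if_neg hD] at he
            rcases Option.map_eq_some_iff.1 he with ⟨w, hw, rfl⟩
            have hgoal := h4 y A ∅ x' hx' g hg C D w hw
            have hne : (∅ ∪ g '' D : Set _) ≠ ∅ := by
              simp only [Set.empty_union, ne_eq, Set.image_eq_empty]; exact hD
            erw [face_inr X n y (A ∪ g '' C) (∅ ∪ g '' D), if_neg hne, hgoal, Option.map_some]
        · erw [if_neg hcard] at h
          exact absurd h (by simp)
      · erw [if_neg hB] at h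
        rcases Option.map_eq_some_iff.1 h with ⟨x', hx', rfl⟩
        erw [face_inl X x' C D] at he
        rcases Option.map_eq_some_iff.1 he with ⟨w, hw, rfl⟩
        have hgoal := h4 y A B x' hx' g hg C D w hw
        have hne : (B ∪ g '' D : Set _) ≠ ∅ := by
          intro hcon
          exact hB (by rw [← Set.subset_empty_iff, ← hcon]; exact Set.subset_union_left)
        erw [face_inr X n y (A ∪ g '' C) (B ∪ g '' D), if_neg hne, hgoal, Option.map_some]

/-- Lifting paths into the first copy. -/
lemma liftL : ∀ {x z : X.cell} (α : X.Path x z) (R : PreIpomset σ), Rec α R →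
    ∃ β : (unfoldStart X).Path (.inl x) (.inl z), Rec β R := by
  intro x z α
  induction α with
  | nil x =>
      intro R hR
      cases hR with
      | nil _ _ hIso => exact ⟨.nil _, .nil _ _ hIso⟩
  | up y A h rest ih =>
      rename_i x z
      intro R hR
      cases hR with
      | up _ _ _ _ hrec hglue =>
          obtain ⟨β, hβ⟩ := ih _ hrec
          have h' : (unfoldStart X).face (.inl y) A ∅ = some (.inl x) := by
            erw [face_inl X y A ∅, h]; rfl
          refine ⟨.up (Sum.inl y) A h' β, ?_⟩
          exact .up _ _ _ _ hβ hglue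
  | down y B h rest ih =>
      rename_i z w
      intro R hR
      cases hR with
      | down _ _ _ _ hrec hglue =>
          obtain ⟨β, hβ⟩ := ih _ hrec
          have h' : (unfoldStart X).face (.inl y) ∅ B = some (.inl z) := by
            erw [face_inl X y ∅ B, h]; rfl
          refine ⟨.down (Sum.inl y) B h' β, ?_⟩
          exact .down _ _ _ _ hβ hglue

include hX in
/-- Lifting paths into the second copy (with sufficient budget bookkeeping). -/
lemma liftR : ∀ {x z : X.cell} (α : X.Path x z) (n : ℕ) (R : PreIpomset σ), Rec α R →
    ∃ c, projCell X c = z ∧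
      ∃ β : (unfoldStart X).Path (.inr (n, x)) c, Rec β R := by
  intro x z α
  induction α with
  | nil x =>
      intro n R hR
      cases hR with
      | nil _ _ hIso => exact ⟨.inr (n, x), rfl, .nil _, .nil _ _ hIso⟩
  | up y A h rest ih =>
      rename_i x z
      intro n R hR
      cases hR with
      | up _ _ _ _ hrec hglue =>
          obtain ⟨c, hc, β, hβ⟩ := ih (n + A.ncard) _ hrec
          have h' : (unfoldStart X).face (.inr (n + A.ncard, y)) A ∅ = some (.inr (n, x)) := by
            erw [face_inr X (n + A.ncard) y A ∅, if_pos rfl, if_pos (Nat.le_add_left _ _), h]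
            erw [Nat.add_sub_cancel]; rfl
          refine ⟨c, hc, .up (Sum.inr (n + A.ncard, y)) A h' β, ?_⟩
          exact .up _ _ _ _ hβ hglue
  | down y B h rest ih =>
      rename_i z w
      intro n R hR
      cases hR with
      | down _ _ _ _ hrec hglue =>
          by_cases hB : B = ∅
          · subst hB
            have hz := h
            rw [hX.2.1 y] at hz
            injection hz with hz
            subst hz
            obtain ⟨c, hc, β, hβ⟩ := ih n _ hrec
            have h' : (unfoldStart X).face (.inr (n, y)) ∅ ∅ = some (.inr (n, y)) :=
              (isPHDA X hX).2.1 _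
            refine ⟨c, hc, .down (Sum.inr (n, y)) ∅ h' β, ?_⟩
            exact .down _ _ _ _ hβ hglue
          · obtain ⟨β, hβ⟩ := liftL X _ _ hrec
            have h' : (unfoldStart X).face (.inr (n, y)) ∅ B = some (.inl z) := by
              erw [face_inr X n y ∅ B, if_neg hB, h]; rfl
            refine ⟨Sum.inl w, rfl, .down (Sum.inr (n, y)) B h' β, ?_⟩
            exact .down _ _ _ _ hβ hglue

/-- Projecting paths of the unfolding back to `X`. -/
lemma projPath : ∀ {c d : (unfoldStart X).cell} (β : (unfoldStart X).Path c d)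
    (R : PreIpomset σ), Rec β R →
    ∃ α : X.Path (projCell X c) (projCell X d), Rec α R := by
  intro c d β
  induction β with
  | nil c =>
      intro R hR
      cases hR with
      | nil _ _ hIso => exact ⟨.nil _, .nil _ _ hIso⟩
  | up y A h rest ih =>
      intro R hR
      cases hR with
      | up _ _ _ _ hrec hglue =>
          obtain ⟨α, hα⟩ := ih _ hrec
          refine ⟨.up (projCell X y) A (face_proj X h) α, ?_⟩
          exact .up _ _ _ _ hα hglue
  | down y B h rest ih =>
      intro R hR
      cases hR with
      | down _ _ _ _ hrec hglue =>
          obtain ⟨α, hα⟩ := ih _ hrec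
          refine ⟨.down (projCell X y) B (face_proj X h) α, ?_⟩
          exact .down _ _ _ _ hα hglue

include hX in
lemma lang_eq : (unfoldStart X).lang = X.lang := by
  ext R
  constructor
  · rintro ⟨c, d, β, hc, hd, hβ⟩
    obtain ⟨α, hα⟩ := projPath X β R hβ
    rcases hc with ⟨p, ⟨x0, hx0, rfl⟩, rfl⟩
    exact ⟨x0, projCell X d, α, hx0, hd, hα⟩
  · rintro ⟨x, z, α, hx, hz, hα⟩
    obtain ⟨c, hc, β, hβ⟩ := liftR X hX α 0 R hα
    exact ⟨.inr (0, x), c, β, ⟨(0, x), ⟨x, hx, rfl⟩, rfl⟩,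
      by show projCell X c ∈ X.accept; rw [hc]; exact hz, hβ⟩

end UnfoldStart

/-- For every partial HDA `X` there is a language-equivalent partial
HDA `X'` in which no initial cell has a defined nonempty lower face. -/
theorem proper_start_cells {σ : Type} [Finite σ] (X : PrePHDA σ) (hX : X.IsPHDA) :
    ∃ X' : PrePHDA σ, X'.IsPHDA ∧
      (∀ x ∈ X'.start, ∀ A : Set (X'.ev x).carrier, A ≠ ∅ → X'.face x A ∅ = none) ∧
      X'.lang = X.lang := by
  refine ⟨unfoldStart X, UnfoldStart.isPHDA X hX, ?_, UnfoldStart.lang_eq X hX⟩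
  rintro x ⟨p, ⟨x0, hx0, rfl⟩, rfl⟩ A hA
  haveI : Finite ((unfoldStart X).ev (Sum.inr (0, x0))).carrier := (X.ev x0).fin
  erw [UnfoldStart.face_inr X 0 x0 A ∅, if_pos rfl, if_neg]
  erw [Nat.le_zero, Set.ncard_eq_zero (Set.toFinite A)]
  exact hA

end HDA
end

section
/- Let X be a relational HDA and ST(X) the ST-automaton with states the cells of X labelled by ev, transitions (p, ⟨ev(q)∖A, ev(q), ev(q)⟩, q) for every q and A ⊆ ev(q) with p ∈ δ⁰_A(q), and (q, ⟨ev(q), ev(q), ev(q)∖B⟩, r) for every q and B ⊆ ev(q) with r ∈ δ¹_B(q), source and target the first and third components, and initial/accepting states those of X. Then there is a one-to-one correspondence between paths in X and paths in ST(X) preserving recognized ipomsets, sources, targets and acceptance; in particular L(ST(X)) = L(X). -/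
open scoped Classical

namespace HDA

variable {σ : Type}

/-- Map a path in `X` to a path in `ST(X)`. -/
def toST {X : PreRHDA σ} : ∀ {x z : X.cell},
    PreRHDA.Path X x z → PAutomaton.Path X.stAut x z
  | _, _, .nil x => PAutomaton.Path.nil (A := X.stAut) x
  | _, _, .up (x := x) y A h rest =>
      PAutomaton.Path.cons (A := X.stAut) (Sum.inl ⟨y, A, ⟨x, h⟩⟩) (toST rest)
  | _, _, .down (z := z) y B h rest =>
      PAutomaton.Path.cons (A := X.stAut) (Sum.inr ⟨y, B, ⟨z, h⟩⟩) (toST rest)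

/-- Map a path in `ST(X)` back to a path in `X`. -/
def fromST {X : PreRHDA σ} : ∀ {p r : X.cell},
    PAutomaton.Path X.stAut p r → PreRHDA.Path X p r
  | _, _, .nil q => .nil q
  | _, _, .cons (Sum.inl ⟨y, A, x, h⟩) rest => .up y A h (fromST rest)
  | _, _, .cons (Sum.inr ⟨y, B, z, h⟩) rest => .down y B h (fromST rest)

theorem rec_inv {A : PAutomaton σ} {p r : A.Q} {γ : PAutomaton.Path A p r}
    {R : PreIpomset σ} (h : PAutomaton.Rec γ R) :
    (match p, r, γ with
    | _, _, .nil q => PreIpomset.Iso (A.mu q).idOf R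
    | _, _, .cons e β =>
        ∃ R', PAutomaton.Rec β R' ∧ PreIpomset.GlueRel (A.lab e) R' R) := by
  cases h with
  | nil q R hiso => exact hiso
  | cons e rest hrec hglue => exact ⟨_, hrec, hglue⟩

theorem toST_fromST {X : PreRHDA σ} : ∀ {p r : X.cell}
    (α : PAutomaton.Path X.stAut p r), toST (fromST α) = α
  | _, _, .nil _ => rfl
  | _, _, .cons (Sum.inl ⟨y, A, x, h⟩) rest =>
      congrArg (fun ρ => PAutomaton.Path.cons (A := X.stAut)
        (Sum.inl ⟨y, A, ⟨x, h⟩⟩) ρ) (toST_fromST rest)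
  | _, _, .cons (Sum.inr ⟨y, B, z, h⟩) rest =>
      congrArg (fun ρ => PAutomaton.Path.cons (A := X.stAut)
        (Sum.inr ⟨y, B, ⟨z, h⟩⟩) ρ) (toST_fromST rest)

theorem fromST_toST {X : PreRHDA σ} : ∀ {x z : X.cell}
    (α : PreRHDA.Path X x z), fromST (toST α) = α
  | _, _, .nil _ => rfl
  | _, _, .up (x := x) y A h rest =>
      congrArg (fun ρ => PreRHDA.Path.up y A h ρ) (fromST_toST rest)
  | _, _, .down (z := z) y B h rest =>
      congrArg (fun ρ => PreRHDA.Path.down y B h ρ) (fromST_toST rest)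

theorem rec_toST {X : PreRHDA σ} {x z : X.cell} {α : PreRHDA.Path X x z}
    {R : PreIpomset σ} (h : PreRHDA.Rec α R) : PAutomaton.Rec (toST α) R := by
  induction h with
  | nil q R hiso => exact PAutomaton.Rec.nil (A := X.stAut) q R hiso
  | @up x z y A h rest R' R hrec hglue ih =>
      exact PAutomaton.Rec.cons (A := X.stAut) (Sum.inl ⟨y, A, ⟨x, h⟩⟩) (toST rest) ih hglue
  | @down z w y B h rest R' R hrec hglue ih =>
      exact PAutomaton.Rec.cons (A := X.stAut) (Sum.inr ⟨y, B, ⟨z, h⟩⟩) (toST rest) ih hglue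

theorem rec_of_toST {X : PreRHDA σ} : ∀ {x z : X.cell} (α : PreRHDA.Path X x z)
    {R : PreIpomset σ}, PAutomaton.Rec (toST α) R → PreRHDA.Rec α R
  | _, _, .nil x, R, h => PreRHDA.Rec.nil x R (rec_inv h)
  | _, _, .up (x := x) y A hf rest, R, h => by
      have h' : PAutomaton.Rec (PAutomaton.Path.cons (A := X.stAut)
          (Sum.inl ⟨y, A, ⟨x, hf⟩⟩) (toST rest)) R := h
      obtain ⟨R', hrec, hglue⟩ := rec_inv h'
      exact PreRHDA.Rec.up y A hf rest (rec_of_toST rest hrec) hglue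
  | _, _, .down (z := z) y B hf rest, R, h => by
      have h' : PAutomaton.Rec (PAutomaton.Path.cons (A := X.stAut)
          (Sum.inr ⟨y, B, ⟨z, hf⟩⟩) (toST rest)) R := h
      obtain ⟨R', hrec, hglue⟩ := rec_inv h'
      exact PreRHDA.Rec.down y B hf rest (rec_of_toST rest hrec) hglue

/-- For a relational HDA `X`, there is a one-to-one correspondence
between paths in `X` and paths in `ST(X)` preserving sources, targets and recognized
ipomsets (hence acceptance); in particular `L(ST(X)) = L(X)`. -/
theorem st_automaton_correspondence {σ : Type} [Finite σ] (X : PreRHDA σ)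
    (hX : X.IsRHDA) :
    (∀ x y : X.cell, ∃ F : PreRHDA.Path X x y ≃ PAutomaton.Path X.stAut x y,
      ∀ (α : PreRHDA.Path X x y) (R : PreIpomset σ),
        PreRHDA.Rec α R ↔ PAutomaton.Rec (F α) R) ∧
    X.stAut.lang = X.lang := by
  have key : ∀ x y : X.cell, ∃ F : PreRHDA.Path X x y ≃ PAutomaton.Path X.stAut x y,
      ∀ (α : PreRHDA.Path X x y) (R : PreIpomset σ),
        PreRHDA.Rec α R ↔ PAutomaton.Rec (F α) R := by
    intro x y
    refine ⟨⟨toST, fromST, fromST_toST, toST_fromST⟩, fun α R => ?_⟩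
    exact ⟨rec_toST, fun h => rec_of_toST α h⟩
  refine ⟨key, ?_⟩
  ext R
  constructor
  · rintro ⟨p, r, α, hp, hr, hrec⟩
    refine ⟨p, r, fromST α, hp, hr, ?_⟩
    exact rec_of_toST (fromST α)
      (Eq.mpr (congrArg (fun ρ => PAutomaton.Rec ρ R) (toST_fromST α)) hrec)
  · rintro ⟨p, r, α, hp, hr, hrec⟩
    exact ⟨p, r, toST α, hp, hr, rec_toST hrec⟩

end HDA
end
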